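/- arXiv:2605.25137 — 4 statements merged into one kernel-verified Lean document; each statement's English description precedes it below -/
import Mathlib

section
/- Let m ≥ 1000 and define η_m(ρ) = sin[(π/2)((m/(m-1))ρ - 1/(m-1))] for ρ ∈ [1/m, 1]. Then for all ρ ∈ [1/m, 1], one has 0 ≤ η_m(ρ) + ρ·η_m'(ρ) ≤ 7/5. -/
open MeasureTheory Real Set

lemma mono_aux {f f' : ℝ → ℝ} (hd : ∀ y, HasDerivAt f (f' y) y)
    (h0 : ∀ y, 0 ≤ y → 0 ≤ f' y) {x : ℝ} (hx : 0 ≤ x) : f 0 ≤ f x := by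
  have hdiff : Differentiable ℝ f := fun y => (hd y).differentiableAt
  have : MonotoneOn f (Set.Ici 0) := by
    apply monotoneOn_of_deriv_nonneg (convex_Ici 0) hdiff.continuous.continuousOn
    · intro y hy
      exact hdiff.differentiableAt.differentiableWithinAt
    · intro y hy
      rw [(hd y).deriv]
      exact h0 y (le_of_lt (by simpa using hy))
  exact this (by simp) (by simpa using hx) hx

lemma sin_ge_cubic {x : ℝ} (hx : 0 ≤ x) : x - x ^ 3 / 6 ≤ Real.sin x := by
  have h := mono_aux (f := fun y => Real.sin y - (y - y ^ 3 / 6))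
    (f' := fun y => Real.cos y - (1 - 3 * y ^ 2 / 6))
    (fun y => (Real.hasDerivAt_sin y).sub
      (((hasDerivAt_id y).sub ((hasDerivAt_pow 3 y).div_const 6))))
    (fun y _ => by nlinarith [Real.one_sub_sq_div_two_le_cos (x := y)]) hx
  simp at h
  linarith

lemma cos_le_quartic {x : ℝ} (hx : 0 ≤ x) : Real.cos x ≤ 1 - x ^ 2 / 2 + x ^ 4 / 24 := by
  have h := mono_aux (f := fun y => 1 - y ^ 2 / 2 + y ^ 4 / 24 - Real.cos y)
    (f' := fun y => 0 - 2 * y ^ 1 / 2 + 4 * y ^ 3 / 24 - (-Real.sin y))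
    (fun y => ((((hasDerivAt_const y (1:ℝ)).sub ((hasDerivAt_pow 2 y).div_const 2)).add
      ((hasDerivAt_pow 4 y).div_const 24)).sub (Real.hasDerivAt_cos y)))
    (fun y hy => by nlinarith [sin_ge_cubic hy]) hx
  simp at h
  linarith

lemma sin_le_quintic {x : ℝ} (hx : 0 ≤ x) : Real.sin x ≤ x - x ^ 3 / 6 + x ^ 5 / 120 := by
  have h := mono_aux (f := fun y => y - y ^ 3 / 6 + y ^ 5 / 120 - Real.sin y)
    (f' := fun y => 1 - 3 * y ^ 2 / 6 + 5 * y ^ 4 / 120 - Real.cos y)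
    (fun y => ((((hasDerivAt_id y).sub ((hasDerivAt_pow 3 y).div_const 6)).add
      ((hasDerivAt_pow 5 y).div_const 120)).sub (Real.hasDerivAt_sin y)))
    (fun y hy => by nlinarith [cos_le_quartic hy]) hx
  simp at h
  linarith


set_option maxHeartbeats 1000000 in
/-- For `m ≥ 1000` and `η_m(ρ) = sin((π/2)((m/(m-1))ρ - 1/(m-1)))`, one has
`0 ≤ η_m(ρ) + ρ·η_m'(ρ) ≤ 7/5` for all `ρ ∈ [1/m, 1]`. -/
theorem cutoff_bound_one (m : ℕ) (hm : 1000 ≤ m) (η : ℝ → ℝ)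
    (hη : ∀ ρ : ℝ, η ρ = Real.sin (π/2 * ((m / ((m : ℝ) - 1)) * ρ - 1 / ((m : ℝ) - 1)))) :
    ∀ ρ ∈ Set.Icc (1/(m:ℝ)) 1,
      0 ≤ η ρ + ρ * deriv η ρ ∧ η ρ + ρ * deriv η ρ ≤ 7/5 := by
  have hm' : (1000:ℝ) ≤ (m:ℝ) := by exact_mod_cast hm
  have hm1 : (999:ℝ) ≤ (m:ℝ) - 1 := by linarith
  have hm0 : (m:ℝ) ≠ 0 := by positivity
  have hm1' : (m:ℝ) - 1 ≠ 0 := by linarith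
  set A : ℝ := (m:ℝ) / ((m:ℝ) - 1) with hA
  set B : ℝ := 1 / ((m:ℝ) - 1) with hB
  have hηf : η = fun ρ => Real.sin (π/2 * (A * ρ - B)) := funext hη
  intro ρ hρ
  obtain ⟨hρ1, hρ2⟩ := hρ
  set θ : ℝ := π/2 * (A * ρ - B) with hθ
  -- derivative
  have hu : HasDerivAt (fun ρ => π/2 * (A * ρ - B)) (π/2 * A) ρ := by
    have h1 : HasDerivAt (fun ρ : ℝ => A * ρ - B) A ρ := by
      simpa using ((hasDerivAt_id ρ).const_mul A).sub_const B
    simpa [mul_comm] using h1.const_mul (π/2)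
  have hd : HasDerivAt η (Real.cos θ * (π/2 * A)) ρ := by
    rw [hηf]
    exact (Real.hasDerivAt_sin θ).comp ρ hu
  have hderiv : deriv η ρ = Real.cos θ * (π/2 * A) := hd.deriv
  set ε : ℝ := π/2 * B with hε
  have hkey : ρ * (π/2 * A) = θ + ε := by rw [hθ, hε]; ring
  have hexpr : η ρ + ρ * deriv η ρ = Real.sin θ + (θ + ε) * Real.cos θ := by
    rw [hderiv, hη ρ, ← hθ]
    have : ρ * (Real.cos θ * (π/2 * A)) = (θ + ε) * Real.cos θ := by
      rw [← hkey]; ring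
    rw [this]
  -- θ bounds
  have hπ : 0 < π := Real.pi_pos
  have hAB : A * (1/(m:ℝ)) = B := by rw [hA, hB]; field_simp
  have hθ0 : 0 ≤ θ := by
    have hApos : 0 < A := by positivity
    have : B ≤ A * ρ := hAB ▸ mul_le_mul_of_nonneg_left hρ1 hApos.le
    have h2 : 0 ≤ A * ρ - B := by linarith
    rw [hθ]; nlinarith
  have hAB1 : A * 1 - B = 1 := by
    rw [hA, hB, mul_one, div_sub_div_same]; exact div_self hm1'
  have hθle : θ ≤ π/2 := by
    have hApos : 0 < A := by positivity
    have h1 : A * ρ ≤ A * 1 := mul_le_mul_of_nonneg_left hρ2 hApos.le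
    have h2 : A * ρ - B ≤ 1 := by linarith
    calc θ = π/2 * (A * ρ - B) := hθ
    _ ≤ π/2 * 1 := by nlinarith
    _ = π/2 := by ring
  have hε0 : 0 ≤ ε := by rw [hε, hB]; positivity
  have hcos0 : 0 ≤ Real.cos θ := Real.cos_nonneg_of_mem_Icc ⟨by linarith, hθle⟩
  have hsin0 : 0 ≤ Real.sin θ := Real.sin_nonneg_of_nonneg_of_le_pi hθ0 (by linarith)
  clear_value A B θ ε
  constructor
  · rw [hexpr]
    have := mul_nonneg (add_nonneg hθ0 hε0) hcos0
    linarith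
  · rw [hexpr]
    have hpi_lt : π < 3.1416 := by linarith [Real.pi_lt_d6]
    have hεle : ε ≤ 0.0016 := by
      have hBle : B ≤ 1/999 := by
        rw [hB]; apply div_le_div_of_nonneg_left (by norm_num) (by norm_num) hm1
      calc ε = π/2 * B := hε
      _ ≤ 3.1416/2 * (1/999) := by
          apply mul_le_mul (by linarith) hBle (by rw [hB]; positivity) (by norm_num)
      _ ≤ 0.0016 := by norm_num
    have hθ2 : θ ≤ 1.5708 := by linarith
    have hs := sin_le_quintic hθ0
    have hc := cos_le_quartic hθ0
    have hcos1 : Real.cos θ ≤ 1 := Real.cos_le_one θ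
    have h1 : θ * Real.cos θ ≤ θ * (1 - θ^2/2 + θ^4/24) := mul_le_mul_of_nonneg_left hc hθ0
    have h2 : ε * Real.cos θ ≤ ε := by nlinarith
    clear hη hηf hu hd hderiv hexpr hkey hAB hAB1 hA hB hθ hε
    have hpoly : 2*θ - (2/3)*θ^3 + θ^5/20 + 0.0016 ≤ 7/5 := by
      nlinarith [sq_nonneg (θ - 1.083), sq_nonneg (θ^2 - 1.173), mul_nonneg hθ0 hθ0,
        sq_nonneg θ, mul_nonneg (mul_nonneg hθ0 hθ0) hθ0, sq_nonneg (θ*(θ-1.083)),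
        mul_nonneg hθ0 (sq_nonneg (θ-1.083)),
        mul_nonneg (sub_nonneg.2 hθ2) (sq_nonneg (θ-1.083))]
    nlinarith
end

section
/- Let 0 < α ≤ π/4, a = π/2 - α, b = π/2 + α. For every f ∈ H¹₀(a,b), one has ∫ₐᵇ f(φ)² sin φ dφ ≤ C_{α,B} ∫ₐᵇ f'(φ)² sin φ dφ, where C_{α,B} = 4α²/(π² - 2α²/cos²α). In particular C_{π/6,B} = 3/25. -/
open MeasureTheory Real Set

private lemma key_id (K T m x : ℝ) (hm2 : m^2 = K - T^2/4)
    (hs : Real.sin x ≠ 0) (hC : Real.cos (m*(x - π/2)) ≠ 0) :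
    (-m^2 / Real.cos (m*(x - π/2))^2 + 1/(2 * Real.sin x^2)) * Real.sin x
      + (-m * (Real.sin (m*(x - π/2)) / Real.cos (m*(x - π/2))) - Real.cos x / (2 * Real.sin x)) * Real.cos x
      + (-m * (Real.sin (m*(x - π/2)) / Real.cos (m*(x - π/2))) - Real.cos x / (2 * Real.sin x))^2 * Real.sin x
      + (K - 1/2 - T^2/2) * Real.sin x
      = Real.cos x^2 / (4 * Real.sin x) - Real.sin x * T^2/4 := by
  have e1 := Real.sin_sq_add_cos_sq (m*(x - π/2))
  have e2 := Real.sin_sq_add_cos_sq x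
  set S := Real.sin (m*(x - π/2))
  set C := Real.cos (m*(x - π/2))
  set s := Real.sin x
  set c := Real.cos x
  field_simp
  linear_combination (16*m^2*s^2)*e1 - (8*C^2)*e2 - (16*s^2*C^2)*hm2

private lemma deriv_h (m x : ℝ) (hC : Real.cos (m*(x - π/2)) ≠ 0) (hs : Real.sin x ≠ 0) :
    HasDerivAt (fun y => -m * (Real.sin (m*(y - π/2)) / Real.cos (m*(y - π/2)))
        - Real.cos y / (2 * Real.sin y))
      (-m^2 / Real.cos (m*(x - π/2))^2 + 1/(2 * Real.sin x^2)) x := by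
  have d1 : HasDerivAt (fun y : ℝ => m*(y - π/2)) m x := by
    simpa using ((hasDerivAt_id x).sub_const (π/2)).const_mul m
  have dS : HasDerivAt (fun y => Real.sin (m*(y - π/2)))
      (Real.cos (m*(x - π/2)) * m) x := (Real.hasDerivAt_sin _).comp x d1
  have dC : HasDerivAt (fun y => Real.cos (m*(y - π/2)))
      (-Real.sin (m*(x - π/2)) * m) x := (Real.hasDerivAt_cos _).comp x d1
  have dq := dS.div dC hC
  have hs2 : (2:ℝ) * Real.sin x ≠ 0 := mul_ne_zero two_ne_zero hs
  have dq2 := (Real.hasDerivAt_cos x).div ((Real.hasDerivAt_sin x).const_mul 2) hs2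
  have dfull := (dq.const_mul (-m)).sub dq2
  refine dfull.congr_deriv (Eq.symm ?_)
  have e1 := Real.sin_sq_add_cos_sq (m*(x - π/2))
  have e2 := Real.sin_sq_add_cos_sq x
  set S := Real.sin (m*(x - π/2))
  set C := Real.cos (m*(x - π/2))
  set s := Real.sin x
  set c := Real.cos x
  field_simp
  linear_combination (2*m^2*s^2)*e1 - C^2*e2

private lemma key_ineq (K T m x cα sα : ℝ) (hm2 : m^2 = K - T^2/4) (hT : T = sα/cα)
    (hcα : 0 < cα) (hs : cα ≤ Real.sin x) (hc2 : Real.cos x^2 ≤ sα^2)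
    (hC : Real.cos (m*(x - π/2)) ≠ 0) :
    (-m^2 / Real.cos (m*(x - π/2))^2 + 1/(2 * Real.sin x^2)) * Real.sin x
      + (-m * (Real.sin (m*(x - π/2)) / Real.cos (m*(x - π/2))) - Real.cos x / (2 * Real.sin x)) * Real.cos x
      + (-m * (Real.sin (m*(x - π/2)) / Real.cos (m*(x - π/2))) - Real.cos x / (2 * Real.sin x))^2 * Real.sin x
      + (K - 1/2 - T^2/2) * Real.sin x ≤ 0 := by
  have hs0 : 0 < Real.sin x := lt_of_lt_of_le hcα hs
  rw [key_id K T m x hm2 hs0.ne' hC]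
  have hrw : Real.cos x^2/(4*Real.sin x) - Real.sin x*T^2/4
      = (Real.cos x^2*cα^2 - Real.sin x^2*sα^2)/(4*Real.sin x*cα^2) := by
    rw [hT]; field_simp
  rw [hrw]
  apply div_nonpos_of_nonpos_of_nonneg
  · have h1 : cα^2 ≤ Real.sin x^2 := by nlinarith
    have h2 : Real.cos x^2*cα^2 ≤ sα^2*cα^2 := mul_le_mul_of_nonneg_right hc2 (sq_nonneg cα)
    have h3 : sα^2*cα^2 ≤ sα^2*Real.sin x^2 := mul_le_mul_of_nonneg_left h1 (sq_nonneg sα)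
    nlinarith
  · exact mul_nonneg (mul_nonneg (by norm_num) hs0.le) (sq_nonneg cα)

set_option maxHeartbeats 1000000 in
/-- Weighted Poincaré inequality with weight `sin φ` on `(π/2-α, π/2+α)` for functions
vanishing at both endpoints, with constant `C_{α,B} = 4α²/(π² - 2α²/cos²α)`;
and `C_{π/6,B} = 3/25`. -/
theorem weighted_poincare_zero_boundary (α : ℝ) (hα : 0 < α) (hα' : α ≤ π/4)
    (f f' : ℝ → ℝ)
    (hderiv : ∀ x ∈ Set.Icc (π/2 - α) (π/2 + α), HasDerivAt f (f' x) x)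
    (hf2 : IntervalIntegrable (fun x => f x ^ 2 * Real.sin x) volume (π/2 - α) (π/2 + α))
    (hf'2 : IntervalIntegrable (fun x => f' x ^ 2 * Real.sin x) volume (π/2 - α) (π/2 + α))
    (hfa : f (π/2 - α) = 0) (hfb : f (π/2 + α) = 0) :
    (∫ x in (π/2 - α)..(π/2 + α), f x ^ 2 * Real.sin x)
      ≤ (4 * α^2 / (π^2 - 2 * α^2 / Real.cos α ^ 2))
          * ∫ x in (π/2 - α)..(π/2 + α), f' x ^ 2 * Real.sin x
    ∧ 4 * (π/6)^2 / (π^2 - 2 * (π/6)^2 / Real.cos (π/6) ^ 2) = 3/25 := by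
  have hπ : (0:ℝ) < π := Real.pi_pos
  constructor
  · -- main inequality
    have hα2 : α < π/2 := by linarith
    have hcosα : 0 < Real.cos α := Real.cos_pos_of_mem_Ioo ⟨by linarith, hα2⟩
    have hsinα : 0 < Real.sin α := Real.sin_pos_of_pos_of_lt_pi hα (by linarith)
    have hsc : Real.sin α ≤ Real.cos α := by
      rw [← Real.cos_pi_div_two_sub]
      exact Real.cos_le_cos_of_nonneg_of_le_pi hα.le (by linarith) (by linarith)
    set T : ℝ := Real.sin α / Real.cos α with hTdef
    have hT0 : 0 < T := div_pos hsinα hcosα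
    have hT1 : T ≤ 1 := by rw [hTdef, div_le_one hcosα]; exact hsc
    have hT2 : T^2 ≤ 1 := by nlinarith
    set K : ℝ := π^2/(4*α^2) with hKdef
    have hk4 : 4 ≤ K := by
      rw [hKdef, le_div_iff₀ (by positivity)]; nlinarith
    set M : ℝ := K - T^2/4 with hMdef
    have hM0 : 0 < M := by rw [hMdef]; linarith
    set m : ℝ := Real.sqrt M with hmdef
    have hm2 : m^2 = K - T^2/4 := (Real.sq_sqrt hM0.le).trans hMdef
    have hm0 : 0 < m := Real.sqrt_pos.mpr hM0
    have hmα : m * α < π/2 := by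
      have hKα : K * α^2 = π^2/4 := by rw [hKdef]; field_simp
      have h1 : (m*α)^2 < (π/2)^2 := by
        have e : (m*α)^2 = K*α^2 - T^2*α^2/4 := by rw [mul_pow, hm2]; ring
        have h2 : 0 < T^2*α^2/4 := by positivity
        rw [e, hKα]; nlinarith
      exact lt_of_pow_lt_pow_left₀ 2 (by positivity) h1
    set a : ℝ := π/2 - α with ha
    set b : ℝ := π/2 + α with hb
    have hab : a ≤ b := by rw [ha, hb]; linarith
    have habs : ∀ x ∈ Icc a b, |x - π/2| ≤ α := by
      intro x hx
      rw [ha] at hx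
      exact abs_le.mpr ⟨by linarith [hx.1], by rw [hb] at hx; linarith [hx.2]⟩
    have hsx : ∀ x ∈ Icc a b, Real.cos α ≤ Real.sin x := by
      intro x hx
      calc Real.cos α ≤ Real.cos |x - π/2| :=
            Real.cos_le_cos_of_nonneg_of_le_pi (abs_nonneg _) (by linarith) (habs x hx)
        _ = Real.cos (x - π/2) := Real.cos_abs _
        _ = Real.sin x := Real.cos_sub_pi_div_two x
    have hsx0 : ∀ x ∈ Icc a b, 0 < Real.sin x := fun x hx => lt_of_lt_of_le hcosα (hsx x hx)
    have hcx2 : ∀ x ∈ Icc a b, (Real.cos x)^2 ≤ (Real.sin α)^2 := by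
      intro x hx
      have h1 := hsx x hx
      nlinarith [Real.sin_sq_add_cos_sq x, Real.sin_sq_add_cos_sq α]
    have hCx0 : ∀ x ∈ Icc a b, 0 < Real.cos (m*(x - π/2)) := by
      intro x hx
      have h1 : |m*(x - π/2)| ≤ m*α := by
        rw [abs_mul, abs_of_pos hm0]
        exact mul_le_mul_of_nonneg_left (habs x hx) hm0.le
      have h2 : Real.cos (m*α) ≤ Real.cos (m*(x-π/2)) := by
        calc Real.cos (m*α) ≤ Real.cos |m*(x - π/2)| :=
              Real.cos_le_cos_of_nonneg_of_le_pi (abs_nonneg _) (by linarith) h1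
          _ = _ := Real.cos_abs _
      have h3 : 0 < Real.cos (m*α) :=
        Real.cos_pos_of_mem_Ioo ⟨by nlinarith, hmα⟩
      linarith
    -- the auxiliary function and its derivative
    set h : ℝ → ℝ := fun x =>
      -m * (Real.sin (m*(x - π/2)) / Real.cos (m*(x - π/2))) - Real.cos x / (2 * Real.sin x)
      with hhdef
    set h' : ℝ → ℝ := fun x =>
      -m^2 / Real.cos (m*(x - π/2))^2 + 1/(2 * Real.sin x^2) with hh'def
    have hhd : ∀ x ∈ Icc a b, HasDerivAt h (h' x) x := by
      intro x hx
      rw [hhdef, hh'def]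
      exact deriv_h m x (hCx0 x hx).ne' (hsx0 x hx).ne'
    set lam : ℝ := K - 1/2 - T^2/2 with hlamdef
    have hlam0 : 0 < lam := by rw [hlamdef]; linarith
    have hkey : ∀ x ∈ Icc a b, h' x * Real.sin x + h x * Real.cos x
        + (h x)^2 * Real.sin x + lam * Real.sin x ≤ 0 := by
      intro x hx
      rw [hhdef, hh'def, hlamdef]
      exact key_ineq K T m x (Real.cos α) (Real.sin α) hm2 hTdef hcosα (hsx x hx)
        (hcx2 x hx) (hCx0 x hx).ne'
    -- continuity facts
    have hconth : ContinuousOn h (Icc a b) :=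
      fun x hx => ((hhd x hx).continuousAt).continuousWithinAt
    have hconth' : ContinuousOn h' (Icc a b) := by
      rw [hh'def]
      apply ContinuousOn.add
      · apply ContinuousOn.div continuousOn_const
        · exact ((Real.continuous_cos.comp
            (continuous_const.mul (continuous_id.sub continuous_const))).pow 2).continuousOn
        · exact fun x hx => pow_ne_zero 2 (hCx0 x hx).ne'
      · apply ContinuousOn.div continuousOn_const
        · exact (continuous_const.mul (Real.continuous_sin.pow 2)).continuousOn
        · exact fun x hx => mul_ne_zero two_ne_zero (pow_ne_zero 2 (hsx0 x hx).ne')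
    have hcontf : ContinuousOn f (Icc a b) :=
      fun x hx => ((hderiv x hx).continuousAt).continuousWithinAt
    -- integrability combinator
    have intf2 : ∀ g : ℝ → ℝ, ContinuousOn g (Icc a b) →
        IntervalIntegrable (fun x => f x^2 * g x) volume a b := by
      intro g hg
      have h1 : IntervalIntegrable (fun x => (f x^2*Real.sin x) * (g x / Real.sin x))
          volume a b := by
        apply hf2.mul_continuousOn
        rw [Set.uIcc_of_le hab]
        exact hg.div Real.continuous_sin.continuousOn (fun x hx => (hsx0 x hx).ne')
      rw [intervalIntegrable_iff_integrableOn_Ioc_of_le hab] at h1 ⊢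
      refine h1.congr_fun (fun x hx => ?_) measurableSet_Ioc
      have hsx' := (hsx0 x (Ioc_subset_Icc_self hx)).ne'
      field_simp
    -- bound for h
    obtain ⟨B, hB⟩ := isCompact_Icc.exists_bound_of_continuousOn hconth
    have hB0 : 0 ≤ B := le_trans (norm_nonneg _) (hB a ⟨le_refl a, hab⟩)
    -- integrability of the cross term
    have intcross : IntervalIntegrable (fun x => 2*(f x*f' x)*(h x*Real.sin x)) volume a b := by
      rw [intervalIntegrable_iff_integrableOn_Ioc_of_le hab]
      have hbd : IntegrableOn (fun x => B*(f x^2*Real.sin x + f' x^2*Real.sin x))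
          (Ioc a b) volume := by
        have h2 := (hf2.add hf'2).const_mul B
        rwa [intervalIntegrable_iff_integrableOn_Ioc_of_le hab] at h2
      apply Integrable.mono' hbd
      · have hg : AEStronglyMeasurable (fun x => h x*Real.sin x) (volume.restrict (Ioc a b)) :=
          ((hconth.mul Real.continuous_sin.continuousOn).mono
            Ioc_subset_Icc_self).aestronglyMeasurable measurableSet_Ioc
        have hfm : AEStronglyMeasurable f (volume.restrict (Ioc a b)) :=
          (hcontf.mono Ioc_subset_Icc_self).aestronglyMeasurable measurableSet_Ioc
        have hf'm : AEStronglyMeasurable f' (volume.restrict (Ioc a b)) := by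
          apply ((measurable_deriv f).aestronglyMeasurable.restrict).congr
          filter_upwards [ae_restrict_mem measurableSet_Ioc] with x hx
          exact (hderiv x (Ioc_subset_Icc_self hx)).deriv
        exact (aestronglyMeasurable_const.mul (hfm.mul hf'm)).mul hg
      · filter_upwards [ae_restrict_mem measurableSet_Ioc] with x hx
        have hxI := Ioc_subset_Icc_self hx
        have hs0 := (hsx0 x hxI).le
        have hhb : |h x| ≤ B := (Real.norm_eq_abs (h x)) ▸ hB x hxI
        rw [Real.norm_eq_abs, abs_mul, abs_mul, abs_mul, abs_mul, abs_two,
          abs_of_nonneg hs0]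
        have k1 : 2 * |f x| * |f' x| ≤ f x^2 + f' x^2 := by
          nlinarith [sq_nonneg (|f x| - |f' x|), sq_abs (f x), sq_abs (f' x)]
        have k2 : 2 * |f x| * |f' x| * |h x| ≤ (f x^2 + f' x^2)*B := by
          apply mul_le_mul k1 hhb (abs_nonneg _)
          positivity
        calc 2 * (|f x| * |f' x|) * (|h x| * Real.sin x)
              = (2 * |f x| * |f' x| * |h x|) * Real.sin x := by ring
          _ ≤ ((f x^2 + f' x^2)*B)*Real.sin x := mul_le_mul_of_nonneg_right k2 hs0
          _ = B*(f x^2*Real.sin x + f' x^2*Real.sin x) := by ring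
    -- other integrabilities
    have cont1 : ContinuousOn (fun x => h' x*Real.sin x + h x*Real.cos x) (Icc a b) :=
      (hconth'.mul Real.continuous_sin.continuousOn).add
        (hconth.mul Real.continuous_cos.continuousOn)
    have cont2 : ContinuousOn (fun x => h x^2*Real.sin x) (Icc a b) :=
      ((hconth.pow 2).mul Real.continuous_sin.continuousOn)
    have intg1 := intf2 _ cont1
    have intsq := intf2 _ cont2
    -- FTC : integral of total derivative vanishes
    have hFint : IntervalIntegrable (fun x => 2*(f x*f' x)*(h x*Real.sin x)
        + f x^2*(h' x*Real.sin x + h x*Real.cos x)) volume a b := intcross.add intg1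
    have hFder : ∀ x ∈ Set.uIcc a b, HasDerivAt (fun y => f y^2*(h y*Real.sin y))
        (2*(f x*f' x)*(h x*Real.sin x) + f x^2*(h' x*Real.sin x + h x*Real.cos x)) x := by
      intro x hx
      rw [Set.uIcc_of_le hab] at hx
      have d1 := (hderiv x hx).pow 2
      have d2 := (hhd x hx).mul (Real.hasDerivAt_sin x)
      have d3 := d1.mul d2
      refine d3.congr_deriv (Eq.symm ?_)
      push_cast
      simp only [Pi.mul_apply, Pi.pow_apply]
      ring
    have hFTC : (∫ x in a..b, (2*(f x*f' x)*(h x*Real.sin x)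
        + f x^2*(h' x*Real.sin x + h x*Real.cos x))) = 0 := by
      rw [intervalIntegral.integral_eq_sub_of_hasDerivAt hFder hFint]
      simp [hfa, hfb]
    have hcross_val : (∫ x in a..b, 2*(f x*f' x)*(h x*Real.sin x))
        = -∫ x in a..b, f x^2*(h' x*Real.sin x + h x*Real.cos x) := by
      have h2 := (intervalIntegral.integral_add intcross intg1).symm.trans hFTC
      linarith [h2]
    -- nonnegativity of the square
    have hsq : (0:ℝ) ≤ ∫ x in a..b, ((f' x^2*Real.sin x - 2*(f x*f' x)*(h x*Real.sin x))
        + f x^2*(h x^2*Real.sin x)) := by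
      have e : (fun x => (f' x^2*Real.sin x - 2*(f x*f' x)*(h x*Real.sin x))
          + f x^2*(h x^2*Real.sin x)) = fun x => (f' x - h x*f x)^2*Real.sin x := by
        funext x; ring
      rw [e]
      exact intervalIntegral.integral_nonneg hab
        (fun x hx => mul_nonneg (sq_nonneg _) (hsx0 x hx).le)
    rw [intervalIntegral.integral_add (hf'2.sub intcross) intsq,
      intervalIntegral.integral_sub hf'2 intcross, hcross_val] at hsq
    -- combine the two f² integrals
    have hcomb : (∫ x in a..b, f x^2*(h' x*Real.sin x + h x*Real.cos x))
        + (∫ x in a..b, f x^2*(h x^2*Real.sin x))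
        = ∫ x in a..b, f x^2*((h' x*Real.sin x + h x*Real.cos x) + h x^2*Real.sin x) := by
      rw [← intervalIntegral.integral_add intg1 intsq]
      apply intervalIntegral.integral_congr
      intro x hx
      ring
    -- monotonicity step
    have contbig : ContinuousOn (fun x => (h' x*Real.sin x + h x*Real.cos x)
        + h x^2*Real.sin x) (Icc a b) := cont1.add cont2
    have hmono : (∫ x in a..b, f x^2*((h' x*Real.sin x + h x*Real.cos x) + h x^2*Real.sin x))
        ≤ ∫ x in a..b, -lam*(f x^2*Real.sin x) := by
      apply intervalIntegral.integral_mono_on hab (intf2 _ contbig) (hf2.const_mul (-lam))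
      intro x hx
      have hk := hkey x hx
      nlinarith [mul_le_mul_of_nonneg_left hk (sq_nonneg (f x))]
    rw [intervalIntegral.integral_const_mul] at hmono
    -- final arithmetic
    have hfin : lam * (∫ x in a..b, f x^2*Real.sin x) ≤ ∫ x in a..b, f' x^2*Real.sin x := by
      nlinarith [hsq, hcomb, hmono]
    have hI'0 : (0:ℝ) ≤ ∫ x in a..b, f' x^2*Real.sin x :=
      intervalIntegral.integral_nonneg hab
        (fun x hx => mul_nonneg (sq_nonneg _) (hsx0 x hx).le)
    have hden : π^2 - 2*α^2/Real.cos α^2 = 4*α^2*lam := by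
      rw [hlamdef, hKdef, hTdef]
      have e := Real.sin_sq_add_cos_sq α
      field_simp
      linear_combination (4*α^2) * e
    have hexp : 4*α^2/(π^2 - 2*α^2/Real.cos α^2) = 1/lam := by
      rw [hden, div_eq_div_iff (by positivity) hlam0.ne']
      ring
    rw [hexp, one_div, inv_mul_eq_div, le_div_iff₀ hlam0]
    linarith [hfin]
  · -- numeric identity
    rw [Real.cos_pi_div_six]
    have h3 : ((Real.sqrt 3)/2)^2 = 3/4 := by
      rw [div_pow, Real.sq_sqrt (by norm_num : (0:ℝ) ≤ 3)]
      norm_num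
    rw [h3]
    have hd : π^2 - 2*(π/6)^2/(3/4) = 25*π^2/27 := by ring
    rw [hd, div_eq_div_iff (by positivity) (by norm_num)]
    ring
end

section
/- Let m ≥ 1000 and j ≥ 0, i ≥ -2 integers with j ≤ i+2, β = (j+1)/2. For every u ∈ H¹(0, ln m) with ∫₀^{ln m} e^{-((5+2i-j)/2)x} u(x) dx = 0, one has ∫₀^{ln m}|u'(x)|² dx + β|u(ln m)|² - β|u(0)|² ≥ 0. Consequently the infimum of ∫₀^{ln m}|u'+βu|² dx / ∫₀^{ln m}u² dx over such u is at least β² = (j+1)²/4. -/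
open MeasureTheory Real Set

/-- Product of two functions with square-integrable on an interval is integrable. -/
lemma sq_int_mul_aux {a b : ℝ} (hab : a ≤ b) {f g : ℝ → ℝ}
    (hfm : AEStronglyMeasurable f (volume.restrict (Set.Ioc a b)))
    (hgm : AEStronglyMeasurable g (volume.restrict (Set.Ioc a b)))
    (hf2 : IntervalIntegrable (fun x => f x ^ 2) volume a b)
    (hg2 : IntervalIntegrable (fun x => g x ^ 2) volume a b) :
    IntervalIntegrable (fun x => f x * g x) volume a b := by
  rw [intervalIntegrable_iff_integrableOn_Ioc_of_le hab] at hf2 hg2 ⊢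
  have hbound : Integrable (fun x => (f x ^ 2 + g x ^ 2) / 2)
      (volume.restrict (Set.Ioc a b)) := (hf2.add hg2).div_const 2
  refine hbound.mono' (hfm.mul hgm) ?_
  filter_upwards with x
  have : |f x * g x| ≤ (f x ^ 2 + g x ^ 2) / 2 := by
    rw [abs_mul]
    nlinarith [sq_nonneg (|f x| - |g x|), abs_nonneg (f x), abs_nonneg (g x),
      sq_abs (f x), sq_abs (g x)]
  rw [Real.norm_eq_abs]
  exact this

/-- Cauchy–Schwarz inequality for interval integrals. -/
lemma cs_interval_aux {a b : ℝ} (hab : a ≤ b) {f g : ℝ → ℝ}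
    (hfg : IntervalIntegrable (fun x => f x * g x) volume a b)
    (hf2 : IntervalIntegrable (fun x => f x ^ 2) volume a b)
    (hg2 : IntervalIntegrable (fun x => g x ^ 2) volume a b) :
    (∫ x in a..b, f x * g x) ^ 2 ≤
      (∫ x in a..b, f x ^ 2) * (∫ x in a..b, g x ^ 2) := by
  set A := ∫ x in a..b, f x ^ 2 with hA
  set B := ∫ x in a..b, g x ^ 2 with hB
  set I := ∫ x in a..b, f x * g x with hI
  have key : ∀ t : ℝ, 0 ≤ B * (t * t) + (2 * I) * t + A := by
    intro t
    have h0 : 0 ≤ ∫ x in a..b, (f x + t * g x) ^ 2 :=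
      intervalIntegral.integral_nonneg hab fun x _ => sq_nonneg _
    have hexp : (∫ x in a..b, (f x + t * g x) ^ 2)
        = A + (2 * t) * I + t ^ 2 * B := by
      have hpt : (fun x => (f x + t * g x) ^ 2)
          = fun x => f x ^ 2 + ((2 * t) * (f x * g x) + t ^ 2 * g x ^ 2) :=
        funext fun x => by ring
      rw [hpt, intervalIntegral.integral_add hf2 ((hfg.const_mul _).add (hg2.const_mul _)),
        intervalIntegral.integral_add (hfg.const_mul _) (hg2.const_mul _),
        intervalIntegral.integral_const_mul, intervalIntegral.integral_const_mul]
      ring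
    rw [hexp] at h0
    nlinarith [h0]
  have hdisc := discrim_le_zero key
  rw [discrim] at hdisc
  nlinarith [hdisc]

set_option maxHeartbeats 1000000 in
/-- One-dimensional variational estimate on `(0, ln m)`: for integers `i ≥ -2`, `0 ≤ j ≤ i+2`,
`β = (j+1)/2` and `u ∈ H¹(0, ln m)` with `∫₀^{ln m} e^{-((5+2i-j)/2)x} u dx = 0`, one has
`∫|u'|² + β u(ln m)² - β u(0)² ≥ 0`, and consequently
`∫|u' + βu|² ≥ β² ∫ u²`. -/
theorem radial_eigenvalue_estimate (m : ℕ) (hm : 1000 ≤ m)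
    (i j : ℤ) (hi : -2 ≤ i) (hj0 : 0 ≤ j) (hj : j ≤ i + 2)
    (u u' : ℝ → ℝ)
    (hd : ∀ x ∈ Set.Icc (0:ℝ) (Real.log m), HasDerivAt u (u' x) x)
    (hu2 : IntervalIntegrable (fun x => u x ^ 2) volume 0 (Real.log m))
    (hu'2 : IntervalIntegrable (fun x => u' x ^ 2) volume 0 (Real.log m))
    (hortho : (∫ x in (0:ℝ)..(Real.log m),
        Real.exp (-((5 + 2*(i:ℝ) - (j:ℝ))/2) * x) * u x) = 0) :
    0 ≤ (∫ x in (0:ℝ)..(Real.log m), u' x ^ 2)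
        + ((j:ℝ)+1)/2 * u (Real.log m) ^ 2 - ((j:ℝ)+1)/2 * u 0 ^ 2
    ∧ (((j:ℝ)+1)^2/4) * (∫ x in (0:ℝ)..(Real.log m), u x ^ 2)
        ≤ ∫ x in (0:ℝ)..(Real.log m), (u' x + ((j:ℝ)+1)/2 * u x) ^ 2 := by
  set L := Real.log m with hLdef
  have hm' : (1000:ℝ) ≤ m := by exact_mod_cast hm
  have hmpos : (0:ℝ) < m := by linarith
  have hL0 : 0 ≤ L := Real.log_nonneg (by linarith)
  set γ : ℝ := (5 + 2*(i:ℝ) - (j:ℝ))/2 with hγdef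
  have hir : (-2:ℝ) ≤ i := by exact_mod_cast hi
  have hjr0 : (0:ℝ) ≤ j := by exact_mod_cast hj0
  have hjr : (j:ℝ) ≤ (i:ℝ) + 2 := by exact_mod_cast hj
  have hγ1 : 1 ≤ 2*γ := by rw [hγdef]; linarith
  have hγpos : 0 < γ := by linarith
  set β : ℝ := ((j:ℝ)+1)/2 with hβdef
  have hβpos : 0 < β := by rw [hβdef]; linarith
  have hβγ : β ≤ γ := by rw [hβdef, hγdef]; linarith
  have hIcc : Set.uIcc (0:ℝ) L = Set.Icc 0 L := Set.uIcc_of_le hL0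
  -- continuity and measurability
  have hucont : ContinuousOn u (Set.Icc 0 L) :=
    fun x hx => ((hd x hx).continuousAt).continuousWithinAt
  have huae : AEStronglyMeasurable u (volume.restrict (Set.Ioc 0 L)) :=
    (hucont.mono Set.Ioc_subset_Icc_self).aestronglyMeasurable measurableSet_Ioc
  have hu'ae : AEStronglyMeasurable u' (volume.restrict (Set.Ioc 0 L)) := by
    have heq : ∀ x ∈ Set.Ioc (0:ℝ) L, deriv u x = u' x :=
      fun x hx => (hd x (Set.Ioc_subset_Icc_self hx)).deriv
    exact (measurable_deriv u).aestronglyMeasurable.congr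
      ((ae_restrict_mem measurableSet_Ioc).mono fun x hx => heq x hx)
  -- integrability of u' and u * u'
  have hu'int : IntervalIntegrable u' volume 0 L := by
    have h1 : IntervalIntegrable (fun x => u' x * 1) volume 0 L :=
      sq_int_mul_aux hL0 hu'ae aestronglyMeasurable_const hu'2
        (by simpa using (intervalIntegrable_const (c := (1:ℝ))))
    simpa using h1
  have huu' : IntervalIntegrable (fun x => u x * u' x) volume 0 L :=
    sq_int_mul_aux hL0 huae hu'ae hu2 hu'2
  -- the exponential weight
  have hEcont : Continuous (fun x : ℝ => Real.exp (-γ * x)) :=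
    Real.continuous_exp.comp (continuous_const.mul continuous_id)
  have hE2int : IntervalIntegrable (fun x => Real.exp (-γ * x) ^ 2) volume 0 L :=
    ((hEcont.pow 2).intervalIntegrable 0 L)
  have hEu' : IntervalIntegrable (fun x => Real.exp (-γ * x) * u' x) volume 0 L :=
    hu'int.continuousOn_mul hEcont.continuousOn
  set I : ℝ := ∫ x in (0:ℝ)..L, Real.exp (-γ * x) * u' x with hIdef
  -- integration by parts to express u 0
  have hvderiv : ∀ x ∈ Set.uIcc (0:ℝ) L,
      HasDerivAt (fun x => -Real.exp (-γ * x)) (γ * Real.exp (-γ * x)) x := by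
    intro x _
    have h1 : HasDerivAt (fun x : ℝ => -γ * x) (-γ) x := by
      simpa using (hasDerivAt_id x).const_mul (-γ)
    have h2 : HasDerivAt (fun x => -Real.exp (-γ * x)) (-(Real.exp (-γ * x) * -γ)) x :=
      (h1.exp).neg
    convert h2 using 1
    ring
  have hparts := intervalIntegral.integral_mul_deriv_eq_deriv_mul
      (fun x hx => hd x (hIcc ▸ hx)) hvderiv hu'int
      ((continuous_const.mul hEcont).intervalIntegrable 0 L)
  have hlhs : (∫ x in (0:ℝ)..L, u x * (γ * Real.exp (-γ * x))) = 0 := by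
    have h1 : (∫ x in (0:ℝ)..L, u x * (γ * Real.exp (-γ * x)))
        = γ * ∫ x in (0:ℝ)..L, Real.exp (-γ * x) * u x := by
      rw [← intervalIntegral.integral_const_mul]
      exact intervalIntegral.integral_congr fun x _ => by ring
    rw [h1, hortho, mul_zero]
  have hrhs : (∫ x in (0:ℝ)..L, u' x * (-Real.exp (-γ * x))) = -I := by
    rw [hIdef, ← intervalIntegral.integral_neg]
    exact intervalIntegral.integral_congr fun x _ => by ring
  have hu0 : u 0 = u L * Real.exp (-γ * L) - I := by
    rw [hlhs, hrhs] at hparts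
    have hexp0 : Real.exp (-γ * 0) = 1 := by simp
    rw [hexp0] at hparts
    simp only [mul_neg, mul_one] at hparts
    linarith
  -- bound the weight integrals
  have hE2val : (∫ x in (0:ℝ)..L, Real.exp (-γ * x) ^ 2)
      = (1 - Real.exp (-(2*γ) * L)) / (2*γ) := by
    have hFderiv : ∀ x ∈ Set.uIcc (0:ℝ) L,
        HasDerivAt (fun x => -Real.exp (-(2*γ) * x) / (2*γ)) (Real.exp (-γ * x) ^ 2) x := by
      intro x _
      have h1 : HasDerivAt (fun x : ℝ => -(2*γ) * x) (-(2*γ)) x := by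
        simpa using (hasDerivAt_id x).const_mul (-(2*γ))
      have h2 : HasDerivAt (fun x => -Real.exp (-(2*γ) * x) / (2*γ))
          (-(Real.exp (-(2*γ) * x) * -(2*γ)) / (2*γ)) x :=
        (h1.exp).neg.div_const (2*γ)
      convert h2 using 1
      rw [pow_two, ← Real.exp_add]
      have : -γ * x + -γ * x = -(2*γ) * x := by ring
      rw [this]
      field_simp
    rw [intervalIntegral.integral_eq_sub_of_hasDerivAt hFderiv hE2int]
    simp only [mul_zero, Real.exp_zero]
    ring
  have hE2le : (∫ x in (0:ℝ)..L, Real.exp (-γ * x) ^ 2) ≤ 1 / (2*γ) := by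
    rw [hE2val]
    have := Real.exp_pos (-(2*γ) * L)
    rw [div_le_div_iff₀ (by linarith) (by linarith)]
    nlinarith
  have hu'2nn : 0 ≤ ∫ x in (0:ℝ)..L, u' x ^ 2 :=
    intervalIntegral.integral_nonneg hL0 fun x _ => sq_nonneg _
  have hCS : I ^ 2 ≤ (∫ x in (0:ℝ)..L, Real.exp (-γ * x) ^ 2) * (∫ x in (0:ℝ)..L, u' x ^ 2) :=
    cs_interval_aux hL0 hEu' hE2int hu'2
  have hI2 : I ^ 2 ≤ (1/(2*γ)) * ∫ x in (0:ℝ)..L, u' x ^ 2 :=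
    hCS.trans (mul_le_mul_of_nonneg_right hE2le hu'2nn)
  -- bound exp(-γL)²
  have hexpL : Real.exp (-γ * L) ^ 2 ≤ 1/1000 := by
    have h1 : Real.exp (-γ * L) ^ 2 = Real.exp (-(2*γ) * L) := by
      rw [pow_two, ← Real.exp_add]; ring_nf
    have h2 : Real.exp (-(2*γ) * L) ≤ Real.exp (-L) := by
      apply Real.exp_le_exp.mpr
      nlinarith
    have h3 : Real.exp (-L) = 1/(m:ℝ) := by
      rw [Real.exp_neg, hLdef, Real.exp_log hmpos]
      ring
    have h4 : 1/(m:ℝ) ≤ 1/1000 := by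
      apply div_le_div_of_nonneg_left (by norm_num) (by norm_num) hm'
    rw [h1]; linarith [h2, h3.le, h3.ge]
  -- Part 1
  set J := ∫ x in (0:ℝ)..L, u' x ^ 2 with hJdef
  have part1 : 0 ≤ J + β * u L ^ 2 - β * u 0 ^ 2 := by
    have h1 : u 0 ^ 2 ≤ 2 * (u L ^ 2 * Real.exp (-γ * L) ^ 2) + 2 * I ^ 2 := by
      rw [hu0]
      nlinarith [sq_nonneg (u L * Real.exp (-γ * L) + I)]
    have h2 : u L ^ 2 * Real.exp (-γ * L) ^ 2 ≤ u L ^ 2 * (1/1000) :=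
      mul_le_mul_of_nonneg_left hexpL (sq_nonneg _)
    have h3 : 2 * ((1/(2*γ)) * J) = (1/γ) * J := by field_simp
    have h4 : u 0 ^ 2 ≤ u L ^ 2 / 500 + (1/γ) * J := by
      have := hI2
      nlinarith
    have h5 : β * u 0 ^ 2 ≤ β * (u L ^ 2 / 500) + β * ((1/γ) * J) := by
      nlinarith [mul_le_mul_of_nonneg_left h4 hβpos.le]
    have h6 : β * ((1/γ) * J) ≤ J := by
      have hfrac : β * (1/γ) ≤ 1 := by
        rw [mul_one_div]
        exact (div_le_one hγpos).mpr hβγ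
      calc β * ((1/γ) * J) = (β * (1/γ)) * J := by ring
        _ ≤ 1 * J := mul_le_mul_of_nonneg_right hfrac hu'2nn
        _ = J := one_mul J
    have h7 : β * (u L ^ 2 / 500) ≤ β * u L ^ 2 := by
      nlinarith [sq_nonneg (u L), hβpos.le]
    linarith
  refine ⟨part1, ?_⟩
  -- Part 2
  have hftc : (∫ x in (0:ℝ)..L, u x * u' x) = u L ^ 2 / 2 - u 0 ^ 2 / 2 := by
    have hderiv2 : ∀ x ∈ Set.uIcc (0:ℝ) L,
        HasDerivAt (fun x => u x ^ 2 / 2) (u x * u' x) x := by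
      intro x hx
      have h : HasDerivAt (fun x => u x ^ 2 / 2) (((2:ℕ):ℝ) * u x ^ (2 - 1) * u' x / 2) x :=
        ((hd x (hIcc ▸ hx)).pow 2).div_const 2
      convert h using 1
      push_cast
      ring
    exact intervalIntegral.integral_eq_sub_of_hasDerivAt hderiv2 huu'
  have hexp2 : (∫ x in (0:ℝ)..L, (u' x + β * u x) ^ 2)
      = J + 2 * β * (∫ x in (0:ℝ)..L, u x * u' x) + β ^ 2 * (∫ x in (0:ℝ)..L, u x ^ 2) := by
    have hpt : (fun x => (u' x + β * u x) ^ 2)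
        = fun x => u' x ^ 2 + ((2 * β) * (u x * u' x) + β ^ 2 * u x ^ 2) :=
      funext fun x => by ring
    rw [hpt, intervalIntegral.integral_add hu'2 ((huu'.const_mul _).add (hu2.const_mul _)),
      intervalIntegral.integral_add (huu'.const_mul _) (hu2.const_mul _),
      intervalIntegral.integral_const_mul, intervalIntegral.integral_const_mul]
    ring
  have hβsq : ((j:ℝ)+1)^2/4 = β ^ 2 := by rw [hβdef]; ring
  rw [hβsq, hexp2, hftc]
  linarith [part1]
end

section
/- Let m ≥ 1000, 0 < α ≤ π/6, and let f, g ∈ H¹(D_m) be axisymmetric functions such that for every ρ ∈ [1/m, 1] there exists φ_ρ ∈ [π/2-α, π/2+α] with g(ρ, φ_ρ) = 0. Then ‖fg‖²_{L²(D_m)} ≤ C ‖f/ρ‖_{L²} (‖∂_ρ f/ρ‖_{L²} + ‖f/ρ²‖_{L²}) ‖g‖_{L²} ‖∂_φ g‖_{L²}, for an absolute constant C independent of m. -/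
open MeasureTheory Real Set

lemma my_integral_cs {X : Type*} [MeasurableSpace X] (μ : Measure X) (u v : X → ℝ)
    (hu : Integrable (fun x => u x ^ 2) μ) (hv : Integrable (fun x => v x ^ 2) μ)
    (hum : AEStronglyMeasurable u μ) (hvm : AEStronglyMeasurable v μ) :
    ∫ x, |u x * v x| ∂μ ≤ Real.sqrt (∫ x, u x ^ 2 ∂μ) * Real.sqrt (∫ x, v x ^ 2 ∂μ) := by
  have hm : AEStronglyMeasurable (fun x => |u x * v x|) μ := by
    simpa [Real.norm_eq_abs, abs_mul] using (hum.mul hvm).norm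
  have hint : Integrable (fun x => |u x * v x|) μ := by
    refine Integrable.mono' (((hu.add hv).div_const 2)) hm ?_
    filter_upwards with x
    simp only [Pi.add_apply, Real.norm_eq_abs, abs_abs, abs_mul]
    nlinarith [sq_nonneg (|u x| - |v x|), sq_abs (u x), sq_abs (v x)]
  set A := ∫ x, u x ^ 2 ∂μ with hA
  set B := ∫ x, v x ^ 2 ∂μ with hB
  have hA0 : 0 ≤ A := integral_nonneg fun x => sq_nonneg _
  have hB0 : 0 ≤ B := integral_nonneg fun x => sq_nonneg _
  rcases eq_or_lt_of_le hA0 with h0 | hApos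
  · have hz : (fun x => u x ^ 2) =ᵐ[μ] 0 :=
      (integral_eq_zero_iff_of_nonneg (fun x => sq_nonneg _) hu).1 h0.symm
    have : ∫ x, |u x * v x| ∂μ = 0 := by
      rw [integral_eq_zero_iff_of_nonneg (fun x => abs_nonneg _) hint]
      filter_upwards [hz] with x hx
      have : u x = 0 := by
        have := hx; simp only [Pi.zero_apply] at this
        exact pow_eq_zero_iff (n := 2) (by norm_num) |>.1 this
      simp [this]
    rw [this]
    positivity
  rcases eq_or_lt_of_le hB0 with h0 | hBpos
  · have hz : (fun x => v x ^ 2) =ᵐ[μ] 0 :=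
      (integral_eq_zero_iff_of_nonneg (fun x => sq_nonneg _) hv).1 h0.symm
    have : ∫ x, |u x * v x| ∂μ = 0 := by
      rw [integral_eq_zero_iff_of_nonneg (fun x => abs_nonneg _) hint]
      filter_upwards [hz] with x hx
      have : v x = 0 := by
        have := hx; simp only [Pi.zero_apply] at this
        exact pow_eq_zero_iff (n := 2) (by norm_num) |>.1 this
      simp [this]
    rw [this]
    positivity
  set t : ℝ := Real.sqrt B / Real.sqrt A with ht
  have hsA : 0 < Real.sqrt A := Real.sqrt_pos.2 hApos
  have hsB : 0 < Real.sqrt B := Real.sqrt_pos.2 hBpos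
  have htpos : 0 < t := div_pos hsB hsA
  have hpt : ∀ x, |u x * v x| ≤ (t * u x ^ 2 + v x ^ 2 / t) / 2 := by
    intro x
    rw [abs_mul, ← sub_nonneg]
    have key : 0 ≤ t ^ 2 * u x ^ 2 + v x ^ 2 - 2 * t * (|u x| * |v x|) := by
      nlinarith [sq_nonneg (t * |u x| - |v x|), sq_abs (u x), sq_abs (v x)]
    have heq : (t * u x ^ 2 + v x ^ 2 / t) / 2 - |u x| * |v x|
        = (t ^ 2 * u x ^ 2 + v x ^ 2 - 2 * t * (|u x| * |v x|)) / (2 * t) := by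
      field_simp
    rw [heq]
    exact div_nonneg key (by positivity)
  calc ∫ x, |u x * v x| ∂μ
      ≤ ∫ x, (t * u x ^ 2 + v x ^ 2 / t) / 2 ∂μ := by
        refine integral_mono hint (((hu.const_mul t).add (hv.div_const t)).div_const 2) hpt
    _ = (t * A + B / t) / 2 := by
        rw [integral_div, integral_add (hu.const_mul t) (hv.div_const t),
          integral_const_mul, integral_div]
    _ = Real.sqrt A * Real.sqrt B := by
        obtain ⟨sa, hsa0, hsa⟩ : ∃ sa, 0 < sa ∧ Real.sqrt A = sa := ⟨_, hsA, rfl⟩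
        obtain ⟨sb, hsb0, hsb⟩ : ∃ sb, 0 < sb ∧ Real.sqrt B = sb := ⟨_, hsB, rfl⟩
        have hA' : A = sa * sa := by rw [← hsa, Real.mul_self_sqrt hA0]
        have hB' : B = sb * sb := by rw [← hsb, Real.mul_self_sqrt hB0]
        rw [ht, hsa, hsb, hA', hB']
        field_simp
        ring

lemma my_intervalCS {b c : ℝ} (hbc : b ≤ c) {u v : ℝ → ℝ}
    (hu : ContinuousOn u (Icc b c)) (hv : ContinuousOn v (Icc b c)) :
    ∫ t in b..c, |u t * v t| ≤
      Real.sqrt (∫ t in b..c, u t ^ 2) * Real.sqrt (∫ t in b..c, v t ^ 2) := by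
  rw [intervalIntegral.integral_of_le hbc, intervalIntegral.integral_of_le hbc,
    intervalIntegral.integral_of_le hbc]
  apply my_integral_cs
  · exact ((hu.pow 2).integrableOn_compact isCompact_Icc).mono_set Ioc_subset_Icc_self
  · exact ((hv.pow 2).integrableOn_compact isCompact_Icc).mono_set Ioc_subset_Icc_self
  · exact (hu.mono Ioc_subset_Icc_self).aestronglyMeasurable measurableSet_Ioc
  · exact (hv.mono Ioc_subset_Icc_self).aestronglyMeasurable measurableSet_Ioc

lemma my_swap {a b c d : ℝ} (hab : a ≤ b) (hcd : c ≤ d) {u : ℝ → ℝ → ℝ}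
    (hu : Continuous (Function.uncurry u)) :
    ∫ x in a..b, ∫ y in c..d, u x y = ∫ y in c..d, ∫ x in a..b, u x y := by
  rw [intervalIntegral.integral_of_le hab, intervalIntegral.integral_of_le hcd]
  simp_rw [intervalIntegral.integral_of_le hcd, intervalIntegral.integral_of_le hab]
  apply MeasureTheory.integral_integral_swap
  rw [Measure.prod_restrict]
  have h1 : IntegrableOn (Function.uncurry u) (Icc a b ×ˢ Icc c d) :=
    hu.continuousOn.integrableOn_compact (isCompact_Icc.prod isCompact_Icc)
  exact h1.mono_set (prod_mono Ioc_subset_Icc_self Ioc_subset_Icc_self)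

lemma my_doubleCS {a b c d : ℝ} (hab : a ≤ b) (hcd : c ≤ d) {u v : ℝ → ℝ → ℝ}
    (hu : Continuous (Function.uncurry u)) (hv : Continuous (Function.uncurry v)) :
    ∫ x in a..b, ∫ y in c..d, |u x y * v x y|
      ≤ Real.sqrt (∫ x in a..b, ∫ y in c..d, u x y ^ 2) *
        Real.sqrt (∫ x in a..b, ∫ y in c..d, v x y ^ 2) := by
  set Gu : ℝ → ℝ := fun x => Real.sqrt (∫ y in c..d, u x y ^ 2) with hGu
  set Gv : ℝ → ℝ := fun x => Real.sqrt (∫ y in c..d, v x y ^ 2) with hGv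
  have hu2 : Continuous (Function.uncurry fun x y => u x y ^ 2) := by
    exact hu.pow 2
  have hv2 : Continuous (Function.uncurry fun x y => v x y ^ 2) := by
    exact hv.pow 2
  have hGuc : Continuous Gu :=
    (intervalIntegral.continuous_parametric_intervalIntegral_of_continuous' hu2 c d).sqrt
  have hGvc : Continuous Gv :=
    (intervalIntegral.continuous_parametric_intervalIntegral_of_continuous' hv2 c d).sqrt
  have inner : ∀ x, ∫ y in c..d, |u x y * v x y| ≤ Gu x * Gv x := fun x =>
    my_intervalCS hcd (hu.uncurry_left x).continuousOn (hv.uncurry_left x).continuousOn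
  have habs : Continuous (Function.uncurry fun x y => |u x y * v x y|) := by
    exact (hu.mul hv).abs
  calc ∫ x in a..b, ∫ y in c..d, |u x y * v x y|
      ≤ ∫ x in a..b, Gu x * Gv x := by
        apply intervalIntegral.integral_mono_on hab
          ((intervalIntegral.continuous_parametric_intervalIntegral_of_continuous' habs c
            d).intervalIntegrable _ _)
          ((hGuc.mul hGvc).intervalIntegrable _ _) (fun x _ => inner x)
    _ = ∫ x in a..b, |Gu x * Gv x| := intervalIntegral.integral_congr fun x _ =>
        (abs_of_nonneg (mul_nonneg (Real.sqrt_nonneg _) (Real.sqrt_nonneg _))).symm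
    _ ≤ Real.sqrt (∫ x in a..b, Gu x ^ 2) * Real.sqrt (∫ x in a..b, Gv x ^ 2) :=
        my_intervalCS hab hGuc.continuousOn hGvc.continuousOn
    _ = _ := by
        congr 2
        · exact intervalIntegral.integral_congr fun x _ =>
            Real.sq_sqrt (intervalIntegral.integral_nonneg hcd fun y _ => sq_nonneg _)
        · exact intervalIntegral.integral_congr fun x _ =>
            Real.sq_sqrt (intervalIntegral.integral_nonneg hcd fun y _ => sq_nonneg _)

lemma ftc_sq_bound {b c x y : ℝ} (hbc : b ≤ c) {u u' : ℝ → ℝ}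
    (hx : x ∈ Icc b c) (hy : y ∈ Icc b c)
    (hd : ∀ t ∈ Icc b c, HasDerivAt u (u' t) t)
    (hu : ContinuousOn u (Icc b c)) (hu' : ContinuousOn u' (Icc b c)) :
    u y * u y - u x * u x ≤ ∫ t in b..c, 2 * |u t * u' t| := by
  have hsub : uIcc x y ⊆ Icc b c := uIcc_subset_Icc hx hy
  have hd2 : ∀ t ∈ uIcc x y, HasDerivAt (fun t => u t * u t) (u' t * u t + u t * u' t) t :=
    fun t ht => (hd t (hsub ht)).mul (hd t (hsub ht))
  have hci : IntervalIntegrable (fun t => u' t * u t + u t * u' t) volume x y :=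
    (((hu'.mul hu).add (hu.mul hu')).mono hsub).intervalIntegrable
  have heq : (∫ t in x..y, (u' t * u t + u t * u' t)) = u y * u y - u x * u x :=
    intervalIntegral.integral_eq_sub_of_hasDerivAt hd2 hci
  have hc2 : ContinuousOn (fun t => 2 * |u t * u' t|) (Icc b c) :=
    continuousOn_const.mul (hu.mul hu').abs
  have habs : ∀ t, |u' t * u t + u t * u' t| ≤ 2 * |u t * u' t| := by
    intro t
    rw [show u' t * u t + u t * u' t = 2 * (u t * u' t) by ring, abs_mul]
    norm_num
  have hbig : IntervalIntegrable (fun t => 2 * |u t * u' t|) volume b c :=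
    (hc2.mono (by rw [uIcc_of_le hbc])).intervalIntegrable
  have hnn : 0 ≤ᵐ[volume.restrict (Set.Ioc b c)] fun t => 2 * |u t * u' t| :=
    Filter.Eventually.of_forall fun t => by positivity
  rw [← heq]
  rcases le_total x y with h | h
  · calc (∫ t in x..y, (u' t * u t + u t * u' t))
        ≤ ∫ t in x..y, 2 * |u t * u' t| := by
          refine intervalIntegral.integral_mono_on h hci
            ((hc2.mono hsub).intervalIntegrable) fun t _ => le_trans (le_abs_self _) (habs t)
      _ ≤ ∫ t in b..c, 2 * |u t * u' t| :=
          intervalIntegral.integral_mono_interval hx.1 h hy.2 hnn hbig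
  · rw [intervalIntegral.integral_symm]
    calc -∫ t in y..x, (u' t * u t + u t * u' t)
        = ∫ t in y..x, -(u' t * u t + u t * u' t) := (intervalIntegral.integral_neg).symm
      _ ≤ ∫ t in y..x, 2 * |u t * u' t| := by
          refine intervalIntegral.integral_mono_on h hci.symm.neg
            ((hc2.mono (by rw [uIcc_comm]; exact hsub)).intervalIntegrable) fun t _ =>
            le_trans (neg_le_abs _) (habs t)
      _ ≤ ∫ t in b..c, 2 * |u t * u' t| :=
          intervalIntegral.integral_mono_interval hy.1 h hx.2 hnn hbig

set_option maxHeartbeats 4000000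

/-- Nonlinear product estimate on `D_m = {1/m < ρ < 1, π/2-α < φ < π/2+α}`
(`dx = 2πρ² sin φ dρ dφ`): there is an absolute constant `C` (independent of `m`) such that
whenever `g(ρ, ·)` vanishes somewhere on the angular interval for every `ρ`,
`‖fg‖²_{L²} ≤ C ‖f/ρ‖ (‖∂_ρ f/ρ‖ + ‖f/ρ²‖) ‖g‖ ‖∂_φ g‖`. -/
theorem nonlinear_product_estimate :
    ∃ C : ℝ, 0 < C ∧
    ∀ (m : ℕ), 1000 ≤ m → ∀ (α : ℝ), 0 < α → α ≤ π/6 →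
    ∀ (f fr g gp : ℝ → ℝ → ℝ),
    ContinuousOn (fun p : ℝ × ℝ => f p.1 p.2)
      (Set.Icc (1/(m:ℝ)) 1 ×ˢ Set.Icc (π/2 - α) (π/2 + α)) →
    ContinuousOn (fun p : ℝ × ℝ => fr p.1 p.2)
      (Set.Icc (1/(m:ℝ)) 1 ×ˢ Set.Icc (π/2 - α) (π/2 + α)) →
    ContinuousOn (fun p : ℝ × ℝ => g p.1 p.2)
      (Set.Icc (1/(m:ℝ)) 1 ×ˢ Set.Icc (π/2 - α) (π/2 + α)) →
    ContinuousOn (fun p : ℝ × ℝ => gp p.1 p.2)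
      (Set.Icc (1/(m:ℝ)) 1 ×ˢ Set.Icc (π/2 - α) (π/2 + α)) →
    (∀ ρ ∈ Set.Icc (1/(m:ℝ)) 1, ∀ φ ∈ Set.Icc (π/2 - α) (π/2 + α),
      HasDerivAt (fun s => f s φ) (fr ρ φ) ρ) →
    (∀ ρ ∈ Set.Icc (1/(m:ℝ)) 1, ∀ φ ∈ Set.Icc (π/2 - α) (π/2 + α),
      HasDerivAt (fun t => g ρ t) (gp ρ φ) φ) →
    (∀ ρ ∈ Set.Icc (1/(m:ℝ)) 1, ∃ φ₀ ∈ Set.Icc (π/2 - α) (π/2 + α), g ρ φ₀ = 0) →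
    (∫ ρ in (1/(m:ℝ))..1, ∫ φ in (π/2 - α)..(π/2 + α),
        (f ρ φ * g ρ φ) ^ 2 * (2*π*ρ^2*Real.sin φ))
      ≤ C * Real.sqrt (∫ ρ in (1/(m:ℝ))..1, ∫ φ in (π/2 - α)..(π/2 + α),
              (f ρ φ / ρ) ^ 2 * (2*π*ρ^2*Real.sin φ))
          * (Real.sqrt (∫ ρ in (1/(m:ℝ))..1, ∫ φ in (π/2 - α)..(π/2 + α),
                (fr ρ φ / ρ) ^ 2 * (2*π*ρ^2*Real.sin φ))
             + Real.sqrt (∫ ρ in (1/(m:ℝ))..1, ∫ φ in (π/2 - α)..(π/2 + α),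
                (f ρ φ / ρ^2) ^ 2 * (2*π*ρ^2*Real.sin φ)))
          * Real.sqrt (∫ ρ in (1/(m:ℝ))..1, ∫ φ in (π/2 - α)..(π/2 + α),
              (g ρ φ) ^ 2 * (2*π*ρ^2*Real.sin φ))
          * Real.sqrt (∫ ρ in (1/(m:ℝ))..1, ∫ φ in (π/2 - α)..(π/2 + α),
              (gp ρ φ) ^ 2 * (2*π*ρ^2*Real.sin φ)) := by
  refine ⟨2, by norm_num, ?_⟩
  intro m hm α hα hα6 f fr g gp hf hfr hg hgp hdf hdg hvan
  set a : ℝ := 1/(m:ℝ) with ha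
  set b : ℝ := π/2 - α with hb
  set c : ℝ := π/2 + α with hc
  have hmR : (1000:ℝ) ≤ (m:ℝ) := by exact_mod_cast hm
  have ha0 : 0 < a := by rw [ha]; positivity
  have haS : a ≤ 1/1000 := by
    rw [ha]; exact one_div_le_one_div_of_le (by norm_num) hmR
  have ha1 : a ≤ 1 := haS.trans (by norm_num)
  have hbc : b ≤ c := by rw [hb, hc]; linarith
  have hπ3 : (3:ℝ) < π := pi_gt_three
  have hsin : ∀ φ ∈ Icc b c, 1/2 ≤ Real.sin φ := by
    intro φ hφ
    have h1 : Real.sin φ = Real.cos (φ - π/2) := by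
      rw [← Real.cos_neg, neg_sub, Real.cos_pi_div_two_sub]
    have h2 : Real.cos (φ - π/2) = Real.cos |φ - π/2| := (Real.cos_abs _).symm
    have h3 : |φ - π/2| ≤ π/6 := by
      rw [abs_le]
      constructor
      · have := hφ.1; rw [hb] at this; linarith
      · have := hφ.2; rw [hc] at this; linarith
    have h4 : Real.cos (π/6) ≤ Real.cos |φ - π/2| :=
      Real.cos_le_cos_of_nonneg_of_le_pi (abs_nonneg _) (by linarith) h3
    have h5 : Real.cos (π/6) = Real.sqrt 3 / 2 := Real.cos_pi_div_six
    have h6 : (1:ℝ) ≤ Real.sqrt 3 := by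
      nlinarith [Real.sq_sqrt (by norm_num : (0:ℝ) ≤ 3), Real.sqrt_nonneg 3]
    rw [h1, h2]
    rw [h5] at h4
    linarith
  have hsin0 : ∀ φ ∈ Icc b c, 0 ≤ Real.sin φ := fun φ hφ => by linarith [hsin φ hφ]
  -- clamping maps
  set Qa : ℝ → ℝ := fun s => max a (min 1 s) with hQa
  set Qb : ℝ → ℝ := fun t => max b (min c t) with hQb
  have hQa_mem : ∀ s, Qa s ∈ Icc a 1 :=
    fun s => ⟨le_max_left _ _, max_le ha1 (min_le_left _ _)⟩
  have hQb_mem : ∀ t, Qb t ∈ Icc b c :=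
    fun t => ⟨le_max_left _ _, max_le hbc (min_le_left _ _)⟩
  have hQa_eq : ∀ s ∈ Icc a 1, Qa s = s := by
    intro s hs; rw [hQa]; simp only
    rw [min_eq_right hs.2, max_eq_right hs.1]
  have hQb_eq : ∀ t ∈ Icc b c, Qb t = t := by
    intro t ht; rw [hQb]; simp only
    rw [min_eq_right ht.2, max_eq_right ht.1]
  have hQac : Continuous Qa := continuous_const.max (continuous_const.min continuous_id)
  have hQbc : Continuous Qb := continuous_const.max (continuous_const.min continuous_id)
  have hQaPos : ∀ s, 0 < Qa s := fun s => lt_of_lt_of_le ha0 (hQa_mem s).1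
  have hQmap : Continuous (fun p : ℝ × ℝ => ((Qa p.1, Qb p.2) : ℝ × ℝ)) :=
    (hQac.comp continuous_fst).prodMk (hQbc.comp continuous_snd)
  have hQmem : ∀ p : ℝ × ℝ, ((Qa p.1, Qb p.2) : ℝ × ℝ) ∈ Icc a 1 ×ˢ Icc b c :=
    fun p => Set.mk_mem_prod (hQa_mem _) (hQb_mem _)
  -- clamped functions
  set F : ℝ → ℝ → ℝ := fun s t => f (Qa s) (Qb t) with hF
  set FR : ℝ → ℝ → ℝ := fun s t => fr (Qa s) (Qb t) with hFR
  set G : ℝ → ℝ → ℝ := fun s t => g (Qa s) (Qb t) with hG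
  set GP : ℝ → ℝ → ℝ := fun s t => gp (Qa s) (Qb t) with hGP
  have hFc : Continuous (Function.uncurry F) := hf.comp_continuous hQmap hQmem
  have hFRc : Continuous (Function.uncurry FR) := hfr.comp_continuous hQmap hQmem
  have hGc : Continuous (Function.uncurry G) := hg.comp_continuous hQmap hQmem
  have hGPc : Continuous (Function.uncurry GP) := hgp.comp_continuous hQmap hQmem
  have hFeq : ∀ ρ ∈ Icc a 1, ∀ φ ∈ Icc b c, F ρ φ = f ρ φ := by
    intro ρ hρ φ hφ; rw [hF]; simp only; rw [hQa_eq ρ hρ, hQb_eq φ hφ]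
  have hFReq : ∀ ρ ∈ Icc a 1, ∀ φ ∈ Icc b c, FR ρ φ = fr ρ φ := by
    intro ρ hρ φ hφ; rw [hFR]; simp only; rw [hQa_eq ρ hρ, hQb_eq φ hφ]
  have hGeq : ∀ ρ ∈ Icc a 1, ∀ φ ∈ Icc b c, G ρ φ = g ρ φ := by
    intro ρ hρ φ hφ; rw [hG]; simp only; rw [hQa_eq ρ hρ, hQb_eq φ hφ]
  have hGPeq : ∀ ρ ∈ Icc a 1, ∀ φ ∈ Icc b c, GP ρ φ = gp ρ φ := by
    intro ρ hρ φ hφ; rw [hGP]; simp only; rw [hQa_eq ρ hρ, hQb_eq φ hφ]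
  -- weight square roots
  set W : ℝ → ℝ := fun φ => Real.sqrt (2*π*Real.sin φ) with hW
  have hWc : Continuous W := Real.continuous_sqrt.comp (by fun_prop)
  have hW2 : ∀ φ ∈ Icc b c, W φ ^ 2 = 2*π*Real.sin φ := by
    intro φ hφ
    exact Real.sq_sqrt (by nlinarith [hsin0 φ hφ])
  -- the comparison functions
  set u1 : ℝ → ℝ → ℝ := fun ρ φ => F ρ φ / Qa ρ * ρ * W φ with hu1
  set v1 : ℝ → ℝ → ℝ := fun ρ φ => FR ρ φ / Qa ρ * ρ * W φ with hv1
  set w1 : ℝ → ℝ → ℝ := fun ρ φ => F ρ φ / (Qa ρ)^2 * ρ * W φ with hw1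
  set u2 : ℝ → ℝ → ℝ := fun ρ φ => G ρ φ * ρ * W φ with hu2
  set v2 : ℝ → ℝ → ℝ := fun ρ φ => GP ρ φ * ρ * W φ with hv2
  have hQafst : Continuous (fun p : ℝ × ℝ => Qa p.1) := hQac.comp continuous_fst
  have hQane : ∀ p : ℝ × ℝ, Qa p.1 ≠ 0 := fun p => (hQaPos p.1).ne'
  have hu1c : Continuous (Function.uncurry u1) :=
    ((hFc.div hQafst hQane).mul continuous_fst).mul (hWc.comp continuous_snd)
  have hv1c : Continuous (Function.uncurry v1) :=
    ((hFRc.div hQafst hQane).mul continuous_fst).mul (hWc.comp continuous_snd)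
  have hw1c : Continuous (Function.uncurry w1) :=
    ((hFc.div (hQafst.pow 2) (fun p => pow_ne_zero 2 (hQane p))).mul continuous_fst).mul
      (hWc.comp continuous_snd)
  have hu2c : Continuous (Function.uncurry u2) :=
    (hGc.mul continuous_fst).mul (hWc.comp continuous_snd)
  have hv2c : Continuous (Function.uncurry v2) :=
    (hGPc.mul continuous_fst).mul (hWc.comp continuous_snd)
  -- congruence of double integrals on the rectangle
  have hcongr2 : ∀ u v : ℝ → ℝ → ℝ, (∀ ρ ∈ Icc a 1, ∀ φ ∈ Icc b c, u ρ φ = v ρ φ) →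
      (∫ ρ in a..1, ∫ φ in b..c, u ρ φ) = ∫ ρ in a..1, ∫ φ in b..c, v ρ φ := by
    intro u v h
    refine intervalIntegral.integral_congr fun ρ hρ => ?_
    rw [uIcc_of_le ha1] at hρ
    exact intervalIntegral.integral_congr fun φ hφ => h ρ hρ φ (by rwa [uIcc_of_le hbc] at hφ)
  -- rewrite the goal in terms of the clamped functions
  have e0 : (∫ ρ in a..1, ∫ φ in b..c, (f ρ φ * g ρ φ) ^ 2 * (2*π*ρ^2*Real.sin φ))
      = ∫ ρ in a..1, ∫ φ in b..c, (F ρ φ * G ρ φ) ^ 2 * (2*π*ρ^2*Real.sin φ) :=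
    hcongr2 _ _ fun ρ hρ φ hφ => by rw [hFeq ρ hρ φ hφ, hGeq ρ hρ φ hφ]
  have e1 : (∫ ρ in a..1, ∫ φ in b..c, (f ρ φ / ρ) ^ 2 * (2*π*ρ^2*Real.sin φ))
      = ∫ ρ in a..1, ∫ φ in b..c, u1 ρ φ ^ 2 := by
    refine hcongr2 _ _ fun ρ hρ φ hφ => ?_
    rw [hu1]; simp only
    rw [mul_pow, mul_pow, hW2 φ hφ, hFeq ρ hρ φ hφ, hQa_eq ρ hρ]
    ring
  have e2 : (∫ ρ in a..1, ∫ φ in b..c, (fr ρ φ / ρ) ^ 2 * (2*π*ρ^2*Real.sin φ))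
      = ∫ ρ in a..1, ∫ φ in b..c, v1 ρ φ ^ 2 := by
    refine hcongr2 _ _ fun ρ hρ φ hφ => ?_
    rw [hv1]; simp only
    rw [mul_pow, mul_pow, hW2 φ hφ, hFReq ρ hρ φ hφ, hQa_eq ρ hρ]
    ring
  have e3 : (∫ ρ in a..1, ∫ φ in b..c, (f ρ φ / ρ^2) ^ 2 * (2*π*ρ^2*Real.sin φ))
      = ∫ ρ in a..1, ∫ φ in b..c, w1 ρ φ ^ 2 := by
    refine hcongr2 _ _ fun ρ hρ φ hφ => ?_
    rw [hw1]; simp only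
    rw [mul_pow, mul_pow, hW2 φ hφ, hFeq ρ hρ φ hφ, hQa_eq ρ hρ]
    ring
  have e4 : (∫ ρ in a..1, ∫ φ in b..c, (g ρ φ) ^ 2 * (2*π*ρ^2*Real.sin φ))
      = ∫ ρ in a..1, ∫ φ in b..c, u2 ρ φ ^ 2 := by
    refine hcongr2 _ _ fun ρ hρ φ hφ => ?_
    rw [hu2]; simp only
    rw [mul_pow, mul_pow, hW2 φ hφ, hGeq ρ hρ φ hφ]
    ring
  have e5 : (∫ ρ in a..1, ∫ φ in b..c, (gp ρ φ) ^ 2 * (2*π*ρ^2*Real.sin φ))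
      = ∫ ρ in a..1, ∫ φ in b..c, v2 ρ φ ^ 2 := by
    refine hcongr2 _ _ fun ρ hρ φ hφ => ?_
    rw [hv2]; simp only
    rw [mul_pow, mul_pow, hW2 φ hφ, hGPeq ρ hρ φ hφ]
    ring
  rw [e0, e1, e2, e3, e4, e5]
  -- slice continuity
  have hgSlice : ∀ ρ ∈ Icc a 1, ContinuousOn (fun t => g ρ t) (Icc b c) := fun ρ hρ =>
    hg.comp (Continuous.continuousOn (by fun_prop)) (fun t ht => Set.mk_mem_prod hρ ht)
  have hgpSlice : ∀ ρ ∈ Icc a 1, ContinuousOn (fun t => gp ρ t) (Icc b c) := fun ρ hρ =>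
    hgp.comp (Continuous.continuousOn (by fun_prop)) (fun t ht => Set.mk_mem_prod hρ ht)
  have hfSliceR : ∀ φ ∈ Icc b c, ContinuousOn (fun s => f s φ) (Icc a 1) := fun φ hφ =>
    hf.comp (Continuous.continuousOn (by fun_prop)) (fun s hs => Set.mk_mem_prod hs hφ)
  have hfrSliceR : ∀ φ ∈ Icc b c, ContinuousOn (fun s => fr s φ) (Icc a 1) := fun φ hφ =>
    hfr.comp (Continuous.continuousOn (by fun_prop)) (fun s hs => Set.mk_mem_prod hs hφ)
  -- angular sup bound for g
  have hGsup : ∀ ρ ∈ Icc a 1, ∀ φ ∈ Icc b c,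
      G ρ φ * G ρ φ ≤ ∫ t in b..c, 2*|G ρ t * GP ρ t| := by
    intro ρ hρ φ hφ
    obtain ⟨φ₀, hφ₀, hg0⟩ := hvan ρ hρ
    have h1 : g ρ φ * g ρ φ - g ρ φ₀ * g ρ φ₀ ≤ ∫ t in b..c, 2*|g ρ t * gp ρ t| :=
      ftc_sq_bound hbc hφ₀ hφ (fun t ht => hdg ρ hρ t ht) (hgSlice ρ hρ) (hgpSlice ρ hρ)
    have h2 : (∫ t in b..c, 2*|g ρ t * gp ρ t|) = ∫ t in b..c, 2*|G ρ t * GP ρ t| :=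
      intervalIntegral.integral_congr fun t ht => by
        rw [uIcc_of_le hbc] at ht; rw [hGeq ρ hρ t ht, hGPeq ρ hρ t ht]
    rw [hg0, mul_zero, sub_zero] at h1
    rw [hGeq ρ hρ φ hφ, ← h2]
    exact h1
  -- radial pointwise bound for f
  have hFpt : ∀ ρ ∈ Icc a 1, ∀ φ ∈ Icc b c,
      (1-a) * (F ρ φ * F ρ φ) ≤ (∫ s in a..1, F s φ * F s φ)
        + (1-a) * ∫ t in a..1, 2*|F t φ * FR t φ| := by
    intro ρ hρ φ hφ
    have key : ∀ s ∈ Icc a 1,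
        f ρ φ * f ρ φ ≤ f s φ * f s φ + ∫ t in a..1, 2*|f t φ * fr t φ| := by
      intro s hs
      have h3 := ftc_sq_bound ha1 hs hρ (fun t ht => hdf t ht φ hφ)
        (hfSliceR φ hφ) (hfrSliceR φ hφ)
      linarith
    have hconst : IntervalIntegrable (fun _ : ℝ => f ρ φ * f ρ φ) volume a 1 :=
      intervalIntegrable_const
    have hffc : ContinuousOn (fun s => f s φ * f s φ) (Icc a 1) :=
      (hfSliceR φ hφ).mul (hfSliceR φ hφ)
    have hrhsC : ContinuousOn
        (fun s => f s φ * f s φ + ∫ t in a..1, 2*|f t φ * fr t φ|) (Icc a 1) :=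
      hffc.add continuousOn_const
    have h5 := intervalIntegral.integral_mono_on ha1 hconst
      ((hrhsC.mono (by rw [uIcc_of_le ha1])).intervalIntegrable) key
    rw [intervalIntegral.integral_const,
      intervalIntegral.integral_add
        ((hffc.mono (by rw [uIcc_of_le ha1])).intervalIntegrable) intervalIntegrable_const,
      intervalIntegral.integral_const, smul_eq_mul, smul_eq_mul] at h5
    have hc1 : (∫ s in a..1, f s φ * f s φ) = ∫ s in a..1, F s φ * F s φ :=
      intervalIntegral.integral_congr fun s hs => by
        rw [uIcc_of_le ha1] at hs; rw [hFeq s hs φ hφ]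
    have hc2 : (∫ t in a..1, 2*|f t φ * fr t φ|) = ∫ t in a..1, 2*|F t φ * FR t φ| :=
      intervalIntegral.integral_congr fun t ht => by
        rw [uIcc_of_le ha1] at ht; rw [hFeq t ht φ hφ, hFReq t ht φ hφ]
    rw [hc1, hc2, ← hFeq ρ hρ φ hφ] at h5
    exact h5
  have h1a : (0:ℝ) < 1 - a := by linarith
  set K1 : ℝ := ∫ s in a..1, ∫ φ in b..c, (F s φ * F s φ) * (2*π*Real.sin φ) with hK1
  set K2 : ℝ := ∫ s in a..1, ∫ φ in b..c, (2*|F s φ * FR s φ|) * (2*π*Real.sin φ) with hK2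
  set K : ℝ := (1/(1-a)) * K1 + K2 with hK
  have hwc : Continuous (fun p : ℝ × ℝ => 2*π*Real.sin p.2) := by fun_prop
  have hswapF : Continuous (fun p : ℝ×ℝ => F p.2 p.1) :=
    hFc.comp (continuous_snd.prodMk continuous_fst)
  have hswapFR : Continuous (fun p : ℝ×ℝ => FR p.2 p.1) :=
    hFRc.comp (continuous_snd.prodMk continuous_fst)
  have hFsup : ∀ ρ ∈ Icc a 1, (∫ φ in b..c, (F ρ φ * F ρ φ) * (2*π*Real.sin φ)) ≤ K := by
    intro ρ hρ
    set Φ1 : ℝ → ℝ := fun φ => ∫ s in a..1, F s φ * F s φ with hΦ1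
    set Φ2 : ℝ → ℝ := fun φ => ∫ t in a..1, 2*|F t φ * FR t φ| with hΦ2
    have hΦ1c : Continuous Φ1 :=
      intervalIntegral.continuous_parametric_intervalIntegral_of_continuous'
        (by exact hswapF.mul hswapF) a 1
    have hΦ2c : Continuous Φ2 :=
      intervalIntegral.continuous_parametric_intervalIntegral_of_continuous'
        (by exact continuous_const.mul (hswapF.mul hswapFR).abs) a 1
    have hpt : ∀ φ ∈ Icc b c, (F ρ φ * F ρ φ) * (2*π*Real.sin φ)
        ≤ ((1/(1-a)) * Φ1 φ + Φ2 φ) * (2*π*Real.sin φ) := by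
      intro φ hφ
      have h6 := hFpt ρ hρ φ hφ
      have hw0 : 0 ≤ 2*π*Real.sin φ := by nlinarith [hsin0 φ hφ]
      refine mul_le_mul_of_nonneg_right ?_ hw0
      have h7 : F ρ φ * F ρ φ = ((1-a) * (F ρ φ * F ρ φ))/(1-a) := by field_simp
      rw [h7]
      rw [div_le_iff₀ h1a]
      calc (1-a) * (F ρ φ * F ρ φ) ≤ Φ1 φ + (1-a) * Φ2 φ := h6
        _ = ((1/(1-a)) * Φ1 φ + Φ2 φ) * (1-a) := by field_simp
    have hleft : IntervalIntegrable
        (fun φ => (F ρ φ * F ρ φ)*(2*π*Real.sin φ)) volume b c :=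
      (((hFc.uncurry_left ρ).mul (hFc.uncurry_left ρ)).mul (by fun_prop)).intervalIntegrable _ _
    have hright : IntervalIntegrable
        (fun φ => ((1/(1-a)) * Φ1 φ + Φ2 φ) * (2*π*Real.sin φ)) volume b c :=
      (((continuous_const.mul hΦ1c).add hΦ2c).mul (by fun_prop)).intervalIntegrable _ _
    have h8 := intervalIntegral.integral_mono_on hbc hleft hright hpt
    have h9 : (∫ φ in b..c, ((1/(1-a)) * Φ1 φ + Φ2 φ) * (2*π*Real.sin φ))
        = (1/(1-a)) * (∫ φ in b..c, Φ1 φ * (2*π*Real.sin φ))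
          + ∫ φ in b..c, Φ2 φ * (2*π*Real.sin φ) := by
      have hptw : ∀ φ, ((1/(1-a)) * Φ1 φ + Φ2 φ) * (2*π*Real.sin φ)
          = (1/(1-a)) * (Φ1 φ * (2*π*Real.sin φ)) + Φ2 φ * (2*π*Real.sin φ) := fun φ => by ring
      simp_rw [hptw]
      rw [intervalIntegral.integral_add
        (f := fun φ => (1/(1-a)) * (Φ1 φ * (2*π*Real.sin φ)))
        (g := fun φ => Φ2 φ * (2*π*Real.sin φ))
        ((continuous_const.mul (hΦ1c.mul (by fun_prop))).intervalIntegrable _ _)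
        ((hΦ2c.mul (by fun_prop)).intervalIntegrable _ _),
        intervalIntegral.integral_const_mul]
    have h10 : (∫ φ in b..c, Φ1 φ * (2*π*Real.sin φ)) = K1 := by
      rw [hK1, my_swap ha1 hbc (u := fun s φ => (F s φ * F s φ)*(2*π*Real.sin φ))
        (by exact (hFc.mul hFc).mul hwc)]
      refine intervalIntegral.integral_congr fun φ hφ => ?_
      rw [hΦ1]; simp only
      rw [← intervalIntegral.integral_mul_const]
    have h11 : (∫ φ in b..c, Φ2 φ * (2*π*Real.sin φ)) = K2 := by
      rw [hK2, my_swap ha1 hbc (u := fun s φ => (2*|F s φ * FR s φ|)*(2*π*Real.sin φ))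
        (by exact (continuous_const.mul (hFc.mul hFRc).abs).mul hwc)]
      refine intervalIntegral.integral_congr fun φ hφ => ?_
      rw [hΦ2]; simp only
      rw [← intervalIntegral.integral_mul_const]
    rw [h9, h10, h11] at h8
    rw [hK]
    exact h8
  -- the angular integral of |G * GP|
  set J : ℝ → ℝ := fun ρ => ∫ t in b..c, 2*|G ρ t * GP ρ t| with hJ
  have hJc : Continuous J :=
    intervalIntegral.continuous_parametric_intervalIntegral_of_continuous'
      (by exact continuous_const.mul (hGc.mul hGPc).abs) b c
  have hJnn : ∀ ρ, 0 ≤ J ρ := fun ρ =>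
    intervalIntegral.integral_nonneg hbc fun t _ => by positivity
  have hw0' : ∀ φ ∈ Icc b c, (0:ℝ) ≤ 2*π*Real.sin φ := fun φ hφ => by
    nlinarith [hsin0 φ hφ]
  have hw2' : ∀ (ρ : ℝ), ∀ φ ∈ Icc b c, (0:ℝ) ≤ 2*π*ρ^2*Real.sin φ := fun ρ φ hφ => by
    nlinarith [mul_nonneg (sq_nonneg ρ) (hsin0 φ hφ)]
  -- inner bound
  have hinner : ∀ ρ ∈ Icc a 1,
      (∫ φ in b..c, (F ρ φ * G ρ φ)^2 * (2*π*ρ^2*Real.sin φ)) ≤ (J ρ * ρ^2) * K := by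
    intro ρ hρ
    have hpt : ∀ φ ∈ Icc b c, (F ρ φ * G ρ φ)^2 * (2*π*ρ^2*Real.sin φ)
        ≤ (J ρ * ρ^2) * ((F ρ φ * F ρ φ) * (2*π*Real.sin φ)) := by
      intro φ hφ
      have h0 : 0 ≤ (F ρ φ * F ρ φ) * (2*π*ρ^2*Real.sin φ) :=
        mul_nonneg (mul_self_nonneg _) (hw2' ρ φ hφ)
      calc (F ρ φ * G ρ φ)^2 * (2*π*ρ^2*Real.sin φ)
          = (G ρ φ * G ρ φ) * ((F ρ φ * F ρ φ) * (2*π*ρ^2*Real.sin φ)) := by ring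
        _ ≤ J ρ * ((F ρ φ * F ρ φ) * (2*π*ρ^2*Real.sin φ)) :=
            mul_le_mul_of_nonneg_right (hGsup ρ hρ φ hφ) h0
        _ = (J ρ * ρ^2) * ((F ρ φ * F ρ φ) * (2*π*Real.sin φ)) := by ring
    have hL : IntervalIntegrable
        (fun φ => (F ρ φ * G ρ φ)^2 * (2*π*ρ^2*Real.sin φ)) volume b c :=
      ((((hFc.uncurry_left ρ).mul (hGc.uncurry_left ρ)).pow 2).mul
        (by fun_prop)).intervalIntegrable _ _
    have hR : IntervalIntegrable
        (fun φ => (J ρ * ρ^2) * ((F ρ φ * F ρ φ)*(2*π*Real.sin φ))) volume b c :=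
      (continuous_const.mul (((hFc.uncurry_left ρ).mul (hFc.uncurry_left ρ)).mul
        (by fun_prop))).intervalIntegrable _ _
    calc (∫ φ in b..c, (F ρ φ * G ρ φ)^2 * (2*π*ρ^2*Real.sin φ))
        ≤ ∫ φ in b..c, (J ρ * ρ^2) * ((F ρ φ * F ρ φ)*(2*π*Real.sin φ)) :=
          intervalIntegral.integral_mono_on hbc hL hR hpt
      _ = (J ρ * ρ^2) * ∫ φ in b..c, (F ρ φ * F ρ φ)*(2*π*Real.sin φ) :=
          intervalIntegral.integral_const_mul _ _
      _ ≤ (J ρ * ρ^2) * K :=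
          mul_le_mul_of_nonneg_left (hFsup ρ hρ) (mul_nonneg (hJnn ρ) (sq_nonneg ρ))
  -- nonnegativity of K
  have hK1nn : 0 ≤ K1 := by
    rw [hK1]
    refine intervalIntegral.integral_nonneg ha1 fun s _ => ?_
    refine intervalIntegral.integral_nonneg hbc fun φ hφ => ?_
    exact mul_nonneg (mul_self_nonneg _) (hw0' φ hφ)
  have hK2nn : 0 ≤ K2 := by
    rw [hK2]
    refine intervalIntegral.integral_nonneg ha1 fun s _ => ?_
    refine intervalIntegral.integral_nonneg hbc fun φ hφ => ?_
    exact mul_nonneg (by positivity) (hw0' φ hφ)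
  have hKnn : 0 ≤ K := by
    rw [hK]
    have h12 : (0:ℝ) ≤ 1/(1-a) := by positivity
    nlinarith
  -- outer bound
  have hwp2 : Continuous (fun p : ℝ×ℝ => 2*π*p.1^2*Real.sin p.2) := by fun_prop
  have hLcont : Continuous (fun ρ => ∫ φ in b..c, (F ρ φ * G ρ φ)^2 * (2*π*ρ^2*Real.sin φ)) :=
    intervalIntegral.continuous_parametric_intervalIntegral_of_continuous'
      (by exact ((hFc.mul hGc).pow 2).mul hwp2) b c
  have hstep1 : (∫ ρ in a..1, ∫ φ in b..c, (F ρ φ * G ρ φ)^2 * (2*π*ρ^2*Real.sin φ))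
      ≤ ∫ ρ in a..1, (J ρ * ρ^2) * K :=
    intervalIntegral.integral_mono_on ha1 (hLcont.intervalIntegrable _ _)
      (((hJc.mul (continuous_pow 2)).mul continuous_const).intervalIntegrable _ _) hinner
  have hstep2 : (∫ ρ in a..1, (J ρ * ρ^2) * K)
      = K * ∫ ρ in a..1, ∫ t in b..c, 2*ρ^2*|G ρ t * GP ρ t| := by
    have hptw : ∀ ρ : ℝ, (J ρ * ρ^2) * K
        = K * (∫ t in b..c, 2*ρ^2*|G ρ t * GP ρ t|) := by
      intro ρ
      have h1 : (∫ t in b..c, 2*ρ^2*|G ρ t * GP ρ t|)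
          = ρ^2 * ∫ t in b..c, 2*|G ρ t * GP ρ t| := by
        rw [← intervalIntegral.integral_const_mul]
        exact intervalIntegral.integral_congr fun t _ => by ring
      rw [h1, hJ]
      ring
    simp_rw [hptw]
    rw [intervalIntegral.integral_const_mul]
  have hTptw : ∀ ρ ∈ Icc a 1, ∀ t ∈ Icc b c,
      2*ρ^2*|G ρ t * GP ρ t| ≤ (2/π) * |u2 ρ t * v2 ρ t| := by
    intro ρ hρ t ht
    have hs12 : 1/2 ≤ Real.sin t := hsin t ht
    have habs : |u2 ρ t * v2 ρ t| = |G ρ t * GP ρ t| * (ρ^2 * (2*π*Real.sin t)) := by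
      rw [hu2, hv2]; simp only
      rw [show G ρ t * ρ * W t * (GP ρ t * ρ * W t)
        = (G ρ t * GP ρ t) * (ρ^2 * W t^2) by ring]
      rw [hW2 t ht, abs_mul]
      congr 1
      exact abs_of_nonneg (by nlinarith [mul_nonneg (sq_nonneg ρ) (hsin0 t ht)])
    rw [habs]
    have hπ0 : (0:ℝ) < π := by linarith
    rw [div_mul_eq_mul_div, le_div_iff₀ hπ0]
    nlinarith [mul_nonneg (mul_nonneg hπ0.le (mul_nonneg (sq_nonneg ρ)
      (abs_nonneg (G ρ t * GP ρ t)))) (by linarith : (0:ℝ) ≤ Real.sin t - 1/2)]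
  have hTcont1 : Continuous (Function.uncurry fun ρ t => 2*ρ^2*|G ρ t * GP ρ t|) := by
    exact ((continuous_const.mul (continuous_fst.pow 2)).mul (hGc.mul hGPc).abs)
  have hTcont2 : Continuous (Function.uncurry fun ρ t => (2/π) * |u2 ρ t * v2 ρ t|) := by
    exact continuous_const.mul (hu2c.mul hv2c).abs
  have hT : (∫ ρ in a..1, ∫ t in b..c, 2*ρ^2*|G ρ t * GP ρ t|)
      ≤ (2/π) * ∫ ρ in a..1, ∫ t in b..c, |u2 ρ t * v2 ρ t| := by
    have hstep : ∀ ρ ∈ Icc a 1, (∫ t in b..c, 2*ρ^2*|G ρ t * GP ρ t|)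
        ≤ ∫ t in b..c, (2/π) * |u2 ρ t * v2 ρ t| := fun ρ hρ =>
      intervalIntegral.integral_mono_on hbc
        ((hTcont1.uncurry_left ρ).intervalIntegrable _ _)
        ((hTcont2.uncurry_left ρ).intervalIntegrable _ _) (hTptw ρ hρ)
    calc (∫ ρ in a..1, ∫ t in b..c, 2*ρ^2*|G ρ t * GP ρ t|)
        ≤ ∫ ρ in a..1, ∫ t in b..c, (2/π) * |u2 ρ t * v2 ρ t| :=
          intervalIntegral.integral_mono_on ha1
            ((intervalIntegral.continuous_parametric_intervalIntegral_of_continuous'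
              hTcont1 b c).intervalIntegrable _ _)
            ((intervalIntegral.continuous_parametric_intervalIntegral_of_continuous'
              hTcont2 b c).intervalIntegrable _ _) hstep
      _ = (2/π) * ∫ ρ in a..1, ∫ t in b..c, |u2 ρ t * v2 ρ t| := by
          simp_rw [intervalIntegral.integral_const_mul]
  have hCS2 : (∫ ρ in a..1, ∫ t in b..c, |u2 ρ t * v2 ρ t|)
      ≤ Real.sqrt (∫ ρ in a..1, ∫ φ in b..c, u2 ρ φ ^ 2) *
        Real.sqrt (∫ ρ in a..1, ∫ φ in b..c, v2 ρ φ ^ 2) :=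
    my_doubleCS ha1 hbc hu2c hv2c
  have hπ0 : (0:ℝ) < π := by linarith
  have hKb1pt : ∀ ρ ∈ Icc a 1, ∀ φ ∈ Icc b c,
      (F ρ φ * F ρ φ) * (2*π*Real.sin φ) ≤ |u1 ρ φ * w1 ρ φ| := by
    intro ρ hρ φ hφ
    have hρpos : 0 < ρ := lt_of_lt_of_le ha0 hρ.1
    have e1' : u1 ρ φ = F ρ φ * W φ := by
      rw [hu1]; simp only; rw [hQa_eq ρ hρ]
      field_simp
    have e2' : w1 ρ φ = F ρ φ / ρ * W φ := by
      rw [hw1]; simp only; rw [hQa_eq ρ hρ]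
      field_simp
    have e3' : u1 ρ φ * w1 ρ φ = (F ρ φ * F ρ φ) * (2*π*Real.sin φ) / ρ := by
      rw [e1', e2', show F ρ φ * W φ * (F ρ φ / ρ * W φ)
        = F ρ φ * F ρ φ * W φ^2 / ρ by ring, hW2 φ hφ]
    have h0 : 0 ≤ (F ρ φ * F ρ φ)*(2*π*Real.sin φ) :=
      mul_nonneg (mul_self_nonneg _) (hw0' φ hφ)
    calc (F ρ φ * F ρ φ)*(2*π*Real.sin φ)
        ≤ (F ρ φ * F ρ φ)*(2*π*Real.sin φ)/ρ := by
          rw [le_div_iff₀ hρpos]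
          nlinarith [hρ.2]
      _ = u1 ρ φ * w1 ρ φ := e3'.symm
      _ ≤ |u1 ρ φ * w1 ρ φ| := le_abs_self _
  have hKb1 : K1 ≤ Real.sqrt (∫ ρ in a..1, ∫ φ in b..c, u1 ρ φ ^ 2) *
      Real.sqrt (∫ ρ in a..1, ∫ φ in b..c, w1 ρ φ ^ 2) := by
    have hmono : ∀ ρ ∈ Icc a 1, (∫ φ in b..c, (F ρ φ * F ρ φ)*(2*π*Real.sin φ))
        ≤ ∫ φ in b..c, |u1 ρ φ * w1 ρ φ| := fun ρ hρ =>
      intervalIntegral.integral_mono_on hbc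
        ((((hFc.uncurry_left ρ).mul (hFc.uncurry_left ρ)).mul
          (by fun_prop)).intervalIntegrable _ _)
        (((hu1c.uncurry_left ρ).mul (hw1c.uncurry_left ρ)).abs.intervalIntegrable _ _)
        (hKb1pt ρ hρ)
    calc K1 ≤ ∫ ρ in a..1, ∫ φ in b..c, |u1 ρ φ * w1 ρ φ| := by
          rw [hK1]
          exact intervalIntegral.integral_mono_on ha1
            ((intervalIntegral.continuous_parametric_intervalIntegral_of_continuous'
              (by exact (hFc.mul hFc).mul hwc) b c).intervalIntegrable _ _)
            ((intervalIntegral.continuous_parametric_intervalIntegral_of_continuous'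
              (by exact (hu1c.mul hw1c).abs) b c).intervalIntegrable _ _) hmono
      _ ≤ _ := my_doubleCS ha1 hbc hu1c hw1c
  have hKb2 : K2 ≤ 2 * (Real.sqrt (∫ ρ in a..1, ∫ φ in b..c, u1 ρ φ ^ 2) *
      Real.sqrt (∫ ρ in a..1, ∫ φ in b..c, v1 ρ φ ^ 2)) := by
    have heq : K2 = ∫ ρ in a..1, ∫ φ in b..c, 2 * |u1 ρ φ * v1 ρ φ| := by
      rw [hK2]
      refine hcongr2 _ _ fun ρ hρ φ hφ => ?_
      have hρ0 : ρ ≠ 0 := (lt_of_lt_of_le ha0 hρ.1).ne'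
      have e1' : u1 ρ φ = F ρ φ * W φ := by
        rw [hu1]; simp only; rw [hQa_eq ρ hρ, div_mul_cancel₀ _ hρ0]
      have e2' : v1 ρ φ = FR ρ φ * W φ := by
        rw [hv1]; simp only; rw [hQa_eq ρ hρ, div_mul_cancel₀ _ hρ0]
      rw [e1', e2', show F ρ φ * W φ * (FR ρ φ * W φ) = F ρ φ * FR ρ φ * W φ^2 by ring,
        hW2 φ hφ, abs_mul (F ρ φ * FR ρ φ) (2*π*Real.sin φ), abs_of_nonneg (hw0' φ hφ)]
      ring
    rw [heq]
    have hpull : (∫ ρ in a..1, ∫ φ in b..c, 2 * |u1 ρ φ * v1 ρ φ|)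
        = 2 * ∫ ρ in a..1, ∫ φ in b..c, |u1 ρ φ * v1 ρ φ| := by
      simp_rw [intervalIntegral.integral_const_mul]
    rw [hpull]
    have h := my_doubleCS ha1 hbc hu1c hv1c
    linarith
  set X1 := Real.sqrt (∫ ρ in a..1, ∫ φ in b..c, u1 ρ φ ^ 2) with hX1
  set X2 := Real.sqrt (∫ ρ in a..1, ∫ φ in b..c, v1 ρ φ ^ 2) with hX2
  set X3 := Real.sqrt (∫ ρ in a..1, ∫ φ in b..c, w1 ρ φ ^ 2) with hX3
  set X4 := Real.sqrt (∫ ρ in a..1, ∫ φ in b..c, u2 ρ φ ^ 2) with hX4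
  set X5 := Real.sqrt (∫ ρ in a..1, ∫ φ in b..c, v2 ρ φ ^ 2) with hX5
  have hX1n : 0 ≤ X1 := Real.sqrt_nonneg _
  have hX2n : 0 ≤ X2 := Real.sqrt_nonneg _
  have hX3n : 0 ≤ X3 := Real.sqrt_nonneg _
  have hX4n : 0 ≤ X4 := Real.sqrt_nonneg _
  have hX5n : 0 ≤ X5 := Real.sqrt_nonneg _
  have hKle2 : K ≤ 2*(X1*X3) + 2*(X1*X2) := by
    rw [hK]
    have hinv : 1/(1-a) ≤ 2 := by rw [div_le_iff₀ h1a]; linarith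
    have h1 : (1/(1-a)) * K1 ≤ 2 * K1 := mul_le_mul_of_nonneg_right hinv hK1nn
    linarith [hKb1, hKb2]
  have hfinal : K * ((2/π) * (X4 * X5)) ≤ 2 * X1 * (X2+X3) * X4 * X5 := by
    have h45 : 0 ≤ (2/π) * (X4*X5) := by positivity
    calc K * ((2/π)*(X4*X5))
        ≤ (2*(X1*X3)+2*(X1*X2)) * ((2/π)*(X4*X5)) :=
          mul_le_mul_of_nonneg_right hKle2 h45
      _ = (4/π) * (X1*(X2+X3)*(X4*X5)) := by
          field_simp
          ring
      _ ≤ 2 * (X1*(X2+X3)*(X4*X5)) := by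
          apply mul_le_mul_of_nonneg_right ?_ (by positivity)
          rw [div_le_iff₀ hπ0]; linarith
      _ = 2 * X1 * (X2+X3) * X4 * X5 := by ring
  calc (∫ ρ in a..1, ∫ φ in b..c, (F ρ φ * G ρ φ) ^ 2 * (2*π*ρ^2*Real.sin φ))
      ≤ ∫ ρ in a..1, (J ρ * ρ^2) * K := hstep1
    _ = K * ∫ ρ in a..1, ∫ t in b..c, 2*ρ^2*|G ρ t * GP ρ t| := hstep2
    _ ≤ K * ((2/π) * (X4 * X5)) := by
        refine mul_le_mul_of_nonneg_left (le_trans hT ?_) hKnn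
        exact mul_le_mul_of_nonneg_left hCS2 (by positivity)
    _ ≤ 2 * X1 * (X2+X3) * X4 * X5 := hfinal
end
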